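/- arXiv:1611.08143 — 5 statements merged into one kernel-verified Lean document; each statement's English description precedes it below -/
import Mathlib

section
/- Let 𝕋 be a combinatorial tree forcing that has the disjoint maximal antichain property. Then the cofinality of the cardinal cof(t⁰) is strictly greater than 𝔠, i.e. cf(cof(t⁰)) > 2^{ℵ₀}. -/
/-- The restriction `x↾n` of a sequence `x ∈ ω^ω` to its first `n` values, as a finite sequence. -/
def seqRestrict (x : ℕ → ℕ) (n : ℕ) : List ℕ := List.ofFn fun i : Fin n => x i

/-- A tree on `ω`: a nonempty set of finite sequences closed under initial segments. -/
def IsSeqTree (T : Set (List ℕ)) : Prop :=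
  T.Nonempty ∧ ∀ s ∈ T, ∀ t : List ℕ, t <+: s → t ∈ T

/-- `[T]`, the set of branches of a tree `T ⊆ ω^{<ω}`. -/
def branches (T : Set (List ℕ)) : Set (ℕ → ℕ) := {x | ∀ n : ℕ, seqRestrict x n ∈ T}

/-- `S` and `T` are compatible in `𝕋` (ordered by inclusion) if they have a common extension. -/
def Compat (𝕋 : Set (Set (List ℕ))) (S T : Set (List ℕ)) : Prop :=
  ∃ R ∈ 𝕋, R ⊆ S ∧ R ⊆ T

/-- A combinatorial tree forcing: a collection `𝕋` of trees on `ω` containing the full tree,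
closed under restrictions `T_s`, with large disjoint antichains, and homogeneous. -/
structure CombTreeForcing (𝕋 : Set (Set (List ℕ))) : Prop where
  /-- every member of `𝕋` is a tree -/
  isTree : ∀ T ∈ 𝕋, IsSeqTree T
  /-- (1) `ω^{<ω} ∈ 𝕋` -/
  univ_mem : (Set.univ : Set (List ℕ)) ∈ 𝕋
  /-- (2) closure under subtrees `T_s` -/
  restrict_mem : ∀ T ∈ 𝕋, ∀ s ∈ T, {t ∈ T | s <+: t ∨ t <+: s} ∈ 𝕋
  /-- (3) large disjoint antichains: a continuous `f : ω^ω → 2^ω` all of whose fibers are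
  branch sets of trees in `𝕋` -/
  large_disjoint : ∃ f : (ℕ → ℕ) → (ℕ → Bool), Continuous f ∧
      ∀ x : ℕ → Bool, ∃ T ∈ 𝕋, f ⁻¹' {x} = branches T
  /-- (4) homogeneity: below every `T ∈ 𝕋` there is an order-preserving injective copy
  `i : ω^{<ω} → T` of the full tree inducing a homeomorphism `g : ω^ω → [T]`,
  `g(x) = ⋃_n i(x↾n)`, such that `S ∈ 𝕋` iff the downward closure of `i''S` is in `𝕋`. -/
  homogeneity : ∀ T ∈ 𝕋, ∃ i : List ℕ → List ℕ,
      Function.Injective i ∧ (∀ s t : List ℕ, s <+: t → i s <+: i t) ∧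
      (∀ s : List ℕ, i s ∈ T) ∧
      ∃ g : (ℕ → ℕ) → (ℕ → ℕ),
        (∀ (x : ℕ → ℕ) (n : ℕ),
          i (seqRestrict x n) = seqRestrict (g x) (i (seqRestrict x n)).length) ∧
        Topology.IsEmbedding g ∧ Set.range g = branches T ∧
        ∀ S : Set (List ℕ), IsSeqTree S → (S ∈ 𝕋 ↔ {t | ∃ s ∈ S, t <+: i s} ∈ 𝕋)

/-- `𝕋` has the disjoint maximal antichain property: there is a maximal antichain
`(T_α : α < 𝔠)` in `𝕋` with `[T_α] ∩ [T_β] = ∅` for `α ≠ β`. -/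
def DisjointMaxAntichainProp (𝕋 : Set (Set (List ℕ))) : Prop :=
  ∃ (ι : Type) (Tfam : ι → Set (List ℕ)),
    Cardinal.mk ι = Cardinal.continuum ∧
    (∀ a : ι, Tfam a ∈ 𝕋) ∧
    (∀ a b : ι, a ≠ b → ¬ Compat 𝕋 (Tfam a) (Tfam b)) ∧
    (∀ T ∈ 𝕋, ∃ a : ι, Compat 𝕋 T (Tfam a)) ∧
    (∀ a b : ι, a ≠ b → branches (Tfam a) ∩ branches (Tfam b) = ∅)

/-- The tree ideal `t⁰` associated with `𝕋`: all `X ⊆ ω^ω` such that below every `T ∈ 𝕋`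
there is `S ∈ 𝕋` with `X ∩ [S] = ∅`. -/
def treeIdeal (𝕋 : Set (Set (List ℕ))) : Set (Set (ℕ → ℕ)) :=
  {X | ∀ T ∈ 𝕋, ∃ S ∈ 𝕋, S ⊆ T ∧ X ∩ branches S = ∅}

/-- The cofinality `cof(I)` of an ideal `I`: the least cardinality of a family `J ⊆ I`
such that every member of `I` is contained in a member of `J`. -/
noncomputable def idealCof (I : Set (Set (ℕ → ℕ))) : Cardinal :=
  sInf {c : Cardinal | ∃ J ⊆ I, Cardinal.mk J = c ∧ ∀ X ∈ I, ∃ Y ∈ J, X ⊆ Y}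


/-! ### Auxiliary lemmas -/

lemma seqRestrict_length (x : ℕ → ℕ) (n : ℕ) : (seqRestrict x n).length = n :=
  List.length_ofFn

lemma seqRestrict_getElem (x : ℕ → ℕ) {n k : ℕ} (h : k < (seqRestrict x n).length) :
    (seqRestrict x n)[k] = x k := by
  simp [seqRestrict]

lemma seqRestrict_prefix (x : ℕ → ℕ) {m n : ℕ} (h : m ≤ n) :
    seqRestrict x m <+: seqRestrict x n := by
  rw [List.prefix_iff_eq_take]
  apply List.ext_getElem
  · simp [seqRestrict_length, h]
  · intro k h1 h2
    rw [List.getElem_take]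
    rw [seqRestrict_getElem, seqRestrict_getElem]

lemma eq_seqRestrict_of_prefix {x : ℕ → ℕ} {n : ℕ} {t : List ℕ}
    (h : t <+: seqRestrict x n) : t = seqRestrict x t.length := by
  have hlen : t.length ≤ n := by
    have := h.length_le; rwa [seqRestrict_length] at this
  have h2 := seqRestrict_prefix x hlen
  rw [List.prefix_iff_eq_take] at h h2
  rw [seqRestrict_length] at h2
  rw [h2, ← h]

lemma prefix_of_length_le {x : ℕ → ℕ} {n : ℕ} {t : List ℕ}
    (h : t <+: seqRestrict x n) {m : ℕ} (hm : t.length ≤ m) (hmn : m ≤ n) :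
    t <+: seqRestrict x m := by
  rw [eq_seqRestrict_of_prefix h]
  exact seqRestrict_prefix x hm

lemma branches_mono {S T : Set (List ℕ)} (h : S ⊆ T) : branches S ⊆ branches T :=
  fun _ hx n => h (hx n)

lemma seqRestrict_eq_iff {x y : ℕ → ℕ} {n : ℕ} :
    seqRestrict x n = seqRestrict y n ↔ ∀ k < n, x k = y k := by
  constructor
  · intro h k hk
    have h1 : k < (seqRestrict x n).length := by rwa [seqRestrict_length]
    have := congrArg (fun l : List ℕ => l[k]?) h
    simp only [List.getElem?_eq_getElem h1,
      List.getElem?_eq_getElem (by rwa [seqRestrict_length] : k < (seqRestrict y n).length)] at this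
    rw [seqRestrict_getElem, seqRestrict_getElem] at this
    exact Option.some_injective _ this
  · intro h
    apply List.ext_getElem (by rw [seqRestrict_length, seqRestrict_length])
    intro k h1 h2
    rw [seqRestrict_getElem, seqRestrict_getElem]
    exact h k (by rwa [seqRestrict_length] at h1)

lemma funext_of_seqRestrict {x y : ℕ → ℕ} (h : ∀ n, seqRestrict x n = seqRestrict y n) :
    x = y := by
  funext k
  exact (seqRestrict_eq_iff.1 (h (k+1))) k (Nat.lt_succ_self k)

lemma seqRestrict_zero (x : ℕ → ℕ) : seqRestrict x 0 = [] := rfl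

section Homog
open Topology

variable {i : List ℕ → List ℕ} {g : (ℕ → ℕ) → (ℕ → ℕ)} {T : Set (List ℕ)}

def clIm (i : List ℕ → List ℕ) (S : Set (List ℕ)) : Set (List ℕ) :=
  {t | ∃ s ∈ S, t <+: i s}

lemma clIm_mono {S S' : Set (List ℕ)} (h : S ⊆ S') : clIm i S ⊆ clIm i S' :=
  fun t ⟨s, hs, hp⟩ => ⟨s, h hs, hp⟩

variable (hinj : Function.Injective i)
  (hmono : ∀ s t : List ℕ, s <+: t → i s <+: i t)
  (hg1 : ∀ (x : ℕ → ℕ) (n : ℕ),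
    i (seqRestrict x n) = seqRestrict (g x) (i (seqRestrict x n)).length)

include hinj hmono in
lemma len_i_strictMono (y : ℕ → ℕ) :
    StrictMono fun n => (i (seqRestrict y n)).length := by
  apply strictMono_nat_of_lt_succ
  intro n
  have hp : seqRestrict y n <+: seqRestrict y (n+1) := seqRestrict_prefix y (Nat.le_succ n)
  have hne : seqRestrict y n ≠ seqRestrict y (n+1) := by
    intro h
    have := congrArg List.length h
    simp [seqRestrict_length] at this
  have hip := hmono _ _ hp
  rcases Nat.lt_or_ge (i (seqRestrict y n)).length (i (seqRestrict y (n+1))).length with h | h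
  · exact h
  · exfalso
    exact hne (hinj (hip.eq_of_length (le_antisymm hip.length_le h)))

include hinj hmono in
lemma le_len_i (y : ℕ → ℕ) (n : ℕ) : n ≤ (i (seqRestrict y n)).length :=
  (len_i_strictMono hinj hmono y).le_apply

include hg1 in
lemma seqRestrict_g_prefix (y : ℕ → ℕ) {m n : ℕ} (hm : m ≤ (i (seqRestrict y n)).length) :
    seqRestrict (g y) m <+: i (seqRestrict y n) := by
  rw [hg1 y n]
  exact seqRestrict_prefix (g y) hm

include hinj hmono hg1 in
lemma g_mem_branches_of_chain {R : Set (List ℕ)}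
    (hRcl : ∀ s ∈ R, ∀ t : List ℕ, t <+: s → t ∈ R)
    {y : ℕ → ℕ} (hy : ∀ n, i (seqRestrict y n) ∈ R) : g y ∈ branches R := by
  intro m
  exact hRcl _ (hy m) _ (seqRestrict_g_prefix hg1 y (le_len_i hinj hmono y m))

include hg1 in
lemma chain_mem_of_g_branch {R : Set (List ℕ)} {y : ℕ → ℕ}
    (hy : g y ∈ branches R) (n : ℕ) : i (seqRestrict y n) ∈ R := by
  rw [hg1 y n]; exact hy _

/-- From an open set in `ω^ω` we get a cylinder neighborhood. -/
lemma exists_cylinder {U : Set (ℕ → ℕ)} (hU : IsOpen U) {y : ℕ → ℕ} (hy : y ∈ U) :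
    ∃ m, ∀ z : ℕ → ℕ, (∀ k < m, z k = y k) → z ∈ U := by
  rw [isOpen_pi_iff] at hU
  obtain ⟨I, u, hIu, hsub⟩ := hU y hy
  rcases I.exists_le with ⟨m, hm⟩
  refine ⟨m + 1, fun z hz => hsub ?_⟩
  intro a ha
  rw [hz a (Nat.lt_succ_of_le (hm a ha))]
  exact (hIu a ha).2

include hg1 in
/-- Continuity modulus for the inverse of the embedding `g`. -/
lemma embedding_modulus (hemb : IsEmbedding g) (y : ℕ → ℕ) (n : ℕ) :
    ∃ m, ∀ w : ℕ → ℕ, (∀ k < m, g w k = g y k) → ∀ k < n, w k = y k := by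
  classical
  set V : Set (ℕ → ℕ) := {z | ∀ k < n, z k = y k} with hV
  have hVopen : IsOpen V := by
    have : V = ⋂ k : Fin n, (fun z : ℕ → ℕ => z k.1) ⁻¹' {y k.1} := by
      ext z; simp [hV, Set.mem_iInter, Fin.forall_iff]
    rw [this]
    exact isOpen_iInter_of_finite fun k =>
      (continuous_apply k.1).isOpen_preimage _ (isOpen_discrete _)
  obtain ⟨U, hUopen, hUV⟩ := hemb.isInducing.isOpen_iff.1 hVopen
  have hyV : y ∈ V := fun k _ => rfl
  have hgyU : g y ∈ U := by rw [← hUV] at hyV; exact hyV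
  obtain ⟨m, hm⟩ := exists_cylinder hUopen hgyU
  refine ⟨m, fun w hw => ?_⟩
  have : g w ∈ U := hm _ hw
  have : w ∈ V := by rw [← hUV]; exact this
  exact this

/-- the extension of a finite sequence by a constant -/
def extSeq (s : List ℕ) (c : ℕ) : ℕ → ℕ := fun k => if h : k < s.length then s[k] else c

lemma seqRestrict_extSeq (s : List ℕ) (c : ℕ) : seqRestrict (extSeq s c) s.length = s := by
  apply List.ext_getElem (by rw [seqRestrict_length])
  intro k h1 h2
  rw [seqRestrict_getElem]
  have hk : k < s.length := h2
  simp [extSeq, hk]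

lemma extSeq_apply_of_ge (s : List ℕ) (c : ℕ) {k : ℕ} (h : s.length ≤ k) :
    extSeq s c k = c := by
  simp [extSeq, Nat.not_lt.2 h]

end Homog

section ClIm
open Topology

variable {i : List ℕ → List ℕ} {g : (ℕ → ℕ) → (ℕ → ℕ)} {T : Set (List ℕ)}

variable (hinj : Function.Injective i)
  (hmono : ∀ s t : List ℕ, s <+: t → i s <+: i t)
  (hiT : ∀ s : List ℕ, i s ∈ T)
  (hg1 : ∀ (x : ℕ → ℕ) (n : ℕ),
    i (seqRestrict x n) = seqRestrict (g x) (i (seqRestrict x n)).length)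
  (hemb : Topology.IsEmbedding g)
  (hrange : Set.range g = branches T)
  (hT : IsSeqTree T)

include hinj hmono hg1 in
lemma g_image_subset_branches_clIm {S : Set (List ℕ)} {y : ℕ → ℕ} (hy : y ∈ branches S) :
    g y ∈ branches (clIm i S) := by
  intro m
  exact ⟨seqRestrict y m, hy m, seqRestrict_g_prefix hg1 y (le_len_i hinj hmono y m)⟩

include hinj hmono hiT hg1 hemb hrange hT in
lemma branches_clIm {S : Set (List ℕ)}
    (hScl : ∀ s ∈ S, ∀ t : List ℕ, t <+: s → t ∈ S) :
    branches (clIm i S) = g '' branches S := by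
  apply Set.Subset.antisymm
  · intro x hx
    -- x ∈ branches T
    have hxT : x ∈ branches T := by
      intro m
      obtain ⟨s, _, hp⟩ := hx m
      exact hT.2 _ (hiT s) _ hp
    have : x ∈ Set.range g := by rw [hrange]; exact hxT
    obtain ⟨y, rfl⟩ := this
    refine ⟨y, ?_, rfl⟩
    intro n
    obtain ⟨m, hmod⟩ := embedding_modulus hg1 hemb y n
    obtain ⟨s, hsS, hp⟩ := hx m
    have hmlen : m ≤ (i s).length := by
      have := hp.length_le; rwa [seqRestrict_length] at this
    -- for any constant extension w of s, g w agrees with g y up to m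
    have hagree : ∀ c, ∀ k < m, g (extSeq s c) k = g y k := by
      intro c k hk
      have h1 : i (seqRestrict (extSeq s c) s.length) =
          seqRestrict (g (extSeq s c)) (i (seqRestrict (extSeq s c) s.length)).length :=
        hg1 _ _
      rw [seqRestrict_extSeq] at h1
      -- (i s)[k] = g (extSeq s c) k  and  (i s)[k] = g y k
      have hkis : k < (i s).length := lt_of_lt_of_le hk hmlen
      have e1 : (i s)[k] = g (extSeq s c) k := by
        have h2 := List.getElem_of_eq h1 hkis
        rwa [seqRestrict_getElem] at h2
      have e2 : (i s)[k] = g y k := by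
        have hk2 : k < (seqRestrict (g y) m).length := by rwa [seqRestrict_length]
        have := hp.getElem hk2
        rw [seqRestrict_getElem] at this
        rw [← this]
      rw [← e1, ← e2]
    have hweq : ∀ c, ∀ k < n, extSeq s c k = y k := fun c => hmod _ (hagree c)
    -- n ≤ s.length, else two different constants give a contradiction
    have hns : n ≤ s.length := by
      by_contra hlt
      push_neg at hlt
      have h0 := hweq 0 s.length hlt
      have h1 := hweq 1 s.length hlt
      rw [extSeq_apply_of_ge s 0 le_rfl] at h0
      rw [extSeq_apply_of_ge s 1 le_rfl] at h1
      omega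
    -- seqRestrict y n is a prefix of s
    have : seqRestrict y n = seqRestrict (extSeq s 0) n := by
      rw [seqRestrict_eq_iff]
      intro k hk
      exact (hweq 0 k hk).symm
    rw [this]
    have hpre : seqRestrict (extSeq s 0) n <+: seqRestrict (extSeq s 0) s.length :=
      seqRestrict_prefix _ hns
    rw [seqRestrict_extSeq] at hpre
    exact hScl s hsS _ hpre
  · rintro _ ⟨y, hy, rfl⟩
    exact g_image_subset_branches_clIm hinj hmono hg1 hy

end ClIm

section Forcing
open Topology

variable {𝕋 : Set (Set (List ℕ))}

lemma exists_branch_through (hctf : CombTreeForcing 𝕋) {R : Set (List ℕ)} (hR : R ∈ 𝕋)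
    {r : List ℕ} (hr : r ∈ R) : ∃ x ∈ branches R, seqRestrict x r.length = r := by
  have hRr : {t ∈ R | r <+: t ∨ t <+: r} ∈ 𝕋 := hctf.restrict_mem R hR r hr
  obtain ⟨i, -, -, -, g, -, -, hrange, -⟩ := hctf.homogeneity _ hRr
  have hx : g (fun _ => 0) ∈ branches {t ∈ R | r <+: t ∨ t <+: r} := by
    rw [← hrange]; exact ⟨_, rfl⟩
  refine ⟨g (fun _ => 0), fun n => (hx n).1, ?_⟩
  rcases (hx r.length).2 with h | h
  · exact (h.eq_of_length (by rw [seqRestrict_length])).symm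
  · exact h.eq_of_length (by rw [seqRestrict_length])

lemma branches_nonempty (hctf : CombTreeForcing 𝕋) {T : Set (List ℕ)} (hT : T ∈ 𝕋) :
    (branches T).Nonempty := by
  obtain ⟨i, -, -, -, g, -, -, hrange, -⟩ := hctf.homogeneity _ hT
  exact ⟨g (fun _ => 0), by rw [← hrange]; exact ⟨_, rfl⟩⟩

section Data

variable {i : List ℕ → List ℕ} {g : (ℕ → ℕ) → (ℕ → ℕ)} {T : Set (List ℕ)}
variable (hctf : CombTreeForcing 𝕋) (hT : T ∈ 𝕋)
  (hinj : Function.Injective i)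
  (hmono : ∀ s t : List ℕ, s <+: t → i s <+: i t)
  (hiT : ∀ s : List ℕ, i s ∈ T)
  (hg1 : ∀ (x : ℕ → ℕ) (n : ℕ),
    i (seqRestrict x n) = seqRestrict (g x) (i (seqRestrict x n)).length)
  (hemb : Topology.IsEmbedding g)
  (hrange : Set.range g = branches T)
  (hiff : ∀ S : Set (List ℕ), IsSeqTree S → (S ∈ 𝕋 ↔ clIm i S ∈ 𝕋))

include hctf hT hinj hmono hiT hg1 hemb hrange hiff

/-- The workhorse: pulling back a condition `R` below `clIm i S'` to a condition below `S'`. -/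
lemma pullback {S' : Set (List ℕ)} (hS' : S' ∈ 𝕋) {R : Set (List ℕ)} (hRmem : R ∈ 𝕋)
    (hR : R ⊆ clIm i S') :
    {s ∈ S' | i s ∈ R} ∈ 𝕋 ∧ clIm i {s ∈ S' | i s ∈ R} = R ∧
      ∀ y ∈ branches {s ∈ S' | i s ∈ R}, g y ∈ branches R := by
  have hRtree := hctf.isTree R hRmem
  have hS'tree := hctf.isTree S' hS'
  have main : ∀ r ∈ R, ∃ y, (∀ n, seqRestrict y n ∈ S' ∧ i (seqRestrict y n) ∈ R) ∧
      r <+: i (seqRestrict y r.length) := by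
    intro r hr
    obtain ⟨x, hxR, hxr⟩ := exists_branch_through hctf hRmem hr
    have hxcl : x ∈ branches (clIm i S') := branches_mono hR hxR
    rw [branches_clIm hinj hmono hiT hg1 hemb hrange (hctf.isTree T hT) hS'tree.2] at hxcl
    obtain ⟨y, hyS', rfl⟩ := hxcl
    refine ⟨y, fun n => ⟨hyS' n, chain_mem_of_g_branch hg1 hxR n⟩, ?_⟩
    have hL : r.length ≤ (i (seqRestrict y r.length)).length := le_len_i hinj hmono y r.length
    have hp := seqRestrict_g_prefix hg1 y hL
    rwa [hxr] at hp
  have htree : IsSeqTree {s ∈ S' | i s ∈ R} := by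
    constructor
    · obtain ⟨r, hr⟩ := hRtree.1
      obtain ⟨y, hy, -⟩ := main r hr
      exact ⟨seqRestrict y 0, (hy 0).1, (hy 0).2⟩
    · rintro s ⟨hsS', hisR⟩ t ht
      exact ⟨hS'tree.2 _ hsS' _ ht, hRtree.2 _ hisR _ (hmono _ _ ht)⟩
  have hcl : clIm i {s ∈ S' | i s ∈ R} = R := by
    apply Set.Subset.antisymm
    · rintro t ⟨s, ⟨-, hisR⟩, hp⟩
      exact hRtree.2 _ hisR _ hp
    · intro r hr
      obtain ⟨y, hy, hp⟩ := main r hr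
      exact ⟨seqRestrict y r.length, ⟨(hy _).1, (hy _).2⟩, hp⟩
  refine ⟨(hiff _ htree).2 (by rw [hcl]; exact hRmem), hcl, ?_⟩
  intro y hy
  exact g_mem_branches_of_chain hinj hmono hg1 hRtree.2 (fun n => (hy n).2)

lemma subset_clIm_univ {R : Set (List ℕ)} (hRmem : R ∈ 𝕋) (hRT : R ⊆ T) :
    R ⊆ clIm i (Set.univ : Set (List ℕ)) := by
  intro r hr
  obtain ⟨x, hxR, hxr⟩ := exists_branch_through hctf hRmem hr
  have : x ∈ Set.range g := by rw [hrange]; exact branches_mono hRT hxR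
  obtain ⟨y, rfl⟩ := this
  refine ⟨seqRestrict y r.length, trivial, ?_⟩
  have hp := seqRestrict_g_prefix hg1 y (le_len_i hinj hmono y r.length)
  rwa [hxr] at hp

lemma preimage_mem_treeIdeal {X : Set (ℕ → ℕ)} (hX : X ∈ treeIdeal 𝕋) :
    g ⁻¹' X ∈ treeIdeal 𝕋 := by
  intro S' hS'
  have hT' : clIm i S' ∈ 𝕋 := (hiff S' (hctf.isTree _ hS')).1 hS'
  obtain ⟨R, hRmem, hRsub, hdisj⟩ := hX _ hT'
  obtain ⟨hS₁mem, -, hbr⟩ := pullback hctf hT hinj hmono hiT hg1 hemb hrange hiff hS' hRmem hRsub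
  refine ⟨_, hS₁mem, fun s hs => hs.1, ?_⟩
  apply Set.eq_empty_iff_forall_notMem.2
  rintro y ⟨hyX, hyS₁⟩
  have : g y ∈ X ∩ branches R := ⟨hyX, hbr y hyS₁⟩
  rw [hdisj] at this
  exact this

end Data

lemma empty_mem_treeIdeal : (∅ : Set (ℕ → ℕ)) ∈ treeIdeal 𝕋 :=
  fun T hT => ⟨T, hT, subset_rfl, by simp⟩

lemma union_mem_treeIdeal {X Y : Set (ℕ → ℕ)} (hX : X ∈ treeIdeal 𝕋) (hY : Y ∈ treeIdeal 𝕋) :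
    X ∪ Y ∈ treeIdeal 𝕋 := by
  intro T hT
  obtain ⟨S₁, hS₁, hsub₁, hd₁⟩ := hX T hT
  obtain ⟨S₂, hS₂, hsub₂, hd₂⟩ := hY S₁ hS₁
  refine ⟨S₂, hS₂, hsub₂.trans hsub₁, ?_⟩
  apply Set.eq_empty_iff_forall_notMem.2
  rintro x ⟨hx, hxS₂⟩
  rcases hx with hx | hx
  · exact Set.eq_empty_iff_forall_notMem.1 hd₁ x ⟨hx, branches_mono hsub₂ hxS₂⟩
  · exact Set.eq_empty_iff_forall_notMem.1 hd₂ x ⟨hx, hxS₂⟩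

lemma univ_not_mem_treeIdeal (hctf : CombTreeForcing 𝕋) :
    (Set.univ : Set (ℕ → ℕ)) ∉ treeIdeal 𝕋 := by
  intro h
  obtain ⟨S, hS, -, hd⟩ := h _ hctf.univ_mem
  obtain ⟨x, hx⟩ := branches_nonempty hctf hS
  exact Set.eq_empty_iff_forall_notMem.1 hd x ⟨trivial, hx⟩

lemma singleton_mem_treeIdeal (hctf : CombTreeForcing 𝕋) (x : ℕ → ℕ) :
    {x} ∈ treeIdeal 𝕋 := by
  intro T hT
  obtain ⟨i, -, -, -, g, -, hemb, hrange, -⟩ := hctf.homogeneity _ hT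
  have h01 : g (fun _ => 0) ≠ g (fun _ => 1) := by
    intro h
    have := congrFun (hemb.injective h) 0
    simp at this
  have : ∃ x' ∈ branches T, x' ≠ x := by
    by_cases h : g (fun _ => 0) = x
    · exact ⟨g (fun _ => 1), by rw [← hrange]; exact ⟨_, rfl⟩, by rw [← h]; exact (Ne.symm h01)⟩
    · exact ⟨g (fun _ => 0), by rw [← hrange]; exact ⟨_, rfl⟩, h⟩
  obtain ⟨x', hx'T, hx'ne⟩ := this
  have : ∃ k, x' k ≠ x k := by
    by_contra h
    push_neg at h
    exact hx'ne (funext h)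
  obtain ⟨k, hk⟩ := this
  refine ⟨_, hctf.restrict_mem T hT (seqRestrict x' (k+1)) (hx'T (k+1)),
    fun t ht => ht.1, ?_⟩
  apply Set.eq_empty_iff_forall_notMem.2
  rintro z ⟨hz, hzS⟩
  rcases hz with rfl
  rcases (hzS (k+1)).2 with h | h
  · have := h.eq_of_length (by rw [seqRestrict_length, seqRestrict_length])
    exact hk ((seqRestrict_eq_iff.1 this) k (Nat.lt_succ_self k))
  · have := h.eq_of_length (by rw [seqRestrict_length, seqRestrict_length])
    exact hk ((seqRestrict_eq_iff.1 this.symm) k (Nat.lt_succ_self k))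

end Forcing

/-- If a combinatorial tree forcing `𝕋` has the disjoint maximal antichain property, then
`cf(cof(t⁰)) > 𝔠 = 2^{ℵ₀}`. -/
theorem cof_treeIdeal_of_disjointMaxAntichain (𝕋 : Set (Set (List ℕ)))
    (hctf : CombTreeForcing 𝕋) (hdmap : DisjointMaxAntichainProp 𝕋) :
    Cardinal.continuum < (idealCof (treeIdeal 𝕋)).ord.cof := by
  classical
  obtain ⟨ι₀, Tfam, hmkι₀, hTfam, hanti, hmax, hdisj⟩ := hdmap
  set I := treeIdeal 𝕋 with hIdef
  set 𝒮 : Set Cardinal := {c | ∃ J ⊆ I, Cardinal.mk J = c ∧ ∀ X ∈ I, ∃ Y ∈ J, X ⊆ Y}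
    with h𝒮def
  have h𝒮ne : 𝒮.Nonempty :=
    ⟨Cardinal.mk I, I, subset_rfl, rfl, fun X hX => ⟨X, hX, subset_rfl⟩⟩
  set κ := idealCof I with hκdef
  have hκsInf : κ = sInf 𝒮 := rfl
  have hκmem : κ ∈ 𝒮 := by rw [hκsInf]; exact csInf_mem h𝒮ne
  obtain ⟨J, hJI, hJκ, hJcof⟩ := hκmem
  -- families of size < κ are not cofinal
  have hnotcof : ∀ K : Set (Set (ℕ → ℕ)), K ⊆ I → Cardinal.mk K < κ →
      ∃ Y ∈ I, ∀ W ∈ K, ¬ Y ⊆ W := by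
    intro K hK hlt
    by_contra h
    push_neg at h
    have : sInf 𝒮 ≤ Cardinal.mk K := csInf_le' ⟨K, hK, rfl, h⟩
    rw [← hκsInf] at this
    exact absurd this (not_le.2 hlt)
  -- κ is infinite
  have hκinf : Cardinal.aleph0 ≤ κ := by
    by_contra h
    push_neg at h
    have hJfin : J.Finite := Cardinal.lt_aleph0_iff_set_finite.1 (by rw [hJκ]; exact h)
    have key : ∀ s : Set (Set (ℕ → ℕ)), s.Finite → (s ⊆ I → ⋃₀ s ∈ I) := by
      intro s hs
      refine Set.Finite.induction_on (motive := fun s _ => s ⊆ I → ⋃₀ s ∈ I) s hs (fun _ => ?_) ?_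
      · rw [Set.sUnion_empty]; exact empty_mem_treeIdeal
      · intro a t _ _ ih hsub
        rw [Set.sUnion_insert]
        exact union_mem_treeIdeal (hsub (Set.mem_insert _ _))
          (ih fun x hx => hsub (Set.mem_insert_of_mem _ hx))
    have hsU : ⋃₀ J ∈ I := key J hJfin hJI
    obtain ⟨S, hSmem, -, hd⟩ := hsU _ hctf.univ_mem
    obtain ⟨x, hx⟩ := branches_nonempty hctf hSmem
    obtain ⟨Y, hYJ, hxY⟩ := hJcof _ (singleton_mem_treeIdeal hctf x)
    exact Set.eq_empty_iff_forall_notMem.1 hd x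
      ⟨⟨Y, hYJ, hxY rfl⟩, hx⟩
  -- suppose the cofinality is at most the continuum
  by_contra hcon
  push_neg at hcon
  obtain ⟨ιc, fc, hlsub, hmkιc⟩ := Ordinal.exists_lsub_cof κ.ord
  have hmkle : Cardinal.mk ιc ≤ Cardinal.mk ι₀ := by
    rw [hmkι₀, hmkιc]; exact hcon
  have hιcne : Nonempty ιc := by
    by_contra hne
    haveI := not_nonempty_iff.1 hne
    rw [Ordinal.lsub_empty] at hlsub
    have hκ0 : κ = 0 := by
      have := congrArg Ordinal.card hlsub
      rwa [Ordinal.card_zero, Cardinal.card_ord, eq_comm] at this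
    rw [hκ0, le_zero_iff] at hκinf
    exact Cardinal.aleph0_ne_zero hκinf
  obtain ⟨emb⟩ := (Cardinal.le_def ιc ι₀).1 hmkle
  set σ : ι₀ → ιc := Function.invFun emb with hσdef
  have hσ : Function.Surjective σ := fun c =>
    ⟨emb c, Function.leftInverse_invFun emb.injective c⟩
  -- enumerate J by κ.ord
  have hmkJ : Cardinal.mk J = Cardinal.mk κ.ord.ToType := by
    rw [hJκ, Cardinal.mk_ord_toType]
  obtain ⟨e⟩ := Cardinal.eq.1 hmkJ
  set rk : ↥J → Ordinal :=
    fun j => ((((Ordinal.ToType.mk (o := κ.ord))).symm (e j)) : Set.Iio κ.ord).1 with hrkdef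
  have hrkinj : Function.Injective rk := by
    intro j j' h
    have h1 : ((Ordinal.ToType.mk (o := κ.ord))).symm (e j) =
        ((Ordinal.ToType.mk (o := κ.ord))).symm (e j') := Subtype.ext h
    exact e.injective (((Ordinal.ToType.mk (o := κ.ord))).symm.injective h1)
  have hrk_lt : ∀ j, rk j < κ.ord := fun j =>
    ((((Ordinal.ToType.mk (o := κ.ord))).symm (e j)) : Set.Iio κ.ord).2
  set Jset : ι₀ → Set (Set (ℕ → ℕ)) :=
    fun a => {X | ∃ hX : X ∈ J, rk ⟨X, hX⟩ < fc (σ a)} with hJsetdef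
  have hJsetI : ∀ a, Jset a ⊆ I := by
    rintro a X ⟨hX, -⟩
    exact hJI hX
  have hJsetlt : ∀ a, Cardinal.mk (Jset a) < κ := by
    intro a
    have hfa : fc (σ a) < κ.ord := by rw [← hlsub]; exact Ordinal.lt_lsub fc (σ a)
    have hembJ : Nonempty (↥(Jset a) ↪ ↥(Set.Iio (fc (σ a)))) := by
      refine ⟨⟨fun X => ⟨rk ⟨X.1, X.2.choose⟩, X.2.choose_spec⟩, ?_⟩⟩
      intro X Y h
      dsimp only at h
      replace h := congrArg Subtype.val h
      have h3 := hrkinj h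
      have h4 := congrArg Subtype.val h3
      exact Subtype.ext h4
    have h5 := Cardinal.lift_mk_le.{1}.2 hembJ
    rw [Ordinal.mk_Iio_ordinal, Cardinal.lift_id] at h5
    exact lt_of_le_of_lt (Cardinal.lift_le.1 h5) (Cardinal.lt_ord.1 hfa)
  have hcover : ∀ X, X ∈ J → ∃ a, X ∈ Jset a := by
    intro X hX
    have h1 : rk ⟨X, hX⟩ < κ.ord := hrk_lt _
    have h2 : Order.succ (rk ⟨X, hX⟩) < κ.ord :=
      (Cardinal.isSuccLimit_ord hκinf).succ_lt h1
    rw [← hlsub] at h2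
    obtain ⟨c, hc⟩ := Ordinal.lt_lsub_iff.1 h2
    obtain ⟨a, ha⟩ := hσ c
    exact ⟨a, hX, by rw [ha]; exact (Order.succ_le_iff.1 hc)⟩
  -- extract homogeneity data for each antichain member
  have hhom := fun a : ι₀ => hctf.homogeneity _ (hTfam a)
  choose ifn hiinj himono hiT gdata using hhom
  choose gfn hg1 hgemb hgrange hgiff using gdata
  have hgiff' : ∀ a (S : Set (List ℕ)), IsSeqTree S → (S ∈ 𝕋 ↔ clIm (ifn a) S ∈ 𝕋) :=
    hgiff
  -- choose sets not covered by the pulled-back families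
  have hKa : ∀ a : ι₀, ∃ Y ∈ I, ∀ W ∈ (fun X => gfn a ⁻¹' X) '' (Jset a), ¬ Y ⊆ W := by
    intro a
    apply hnotcof
    · rintro W ⟨X, hXJ, rfl⟩
      obtain ⟨hXJ', -⟩ := hXJ
      exact preimage_mem_treeIdeal hctf (hTfam a) (hiinj a) (himono a) (hiT a) (hg1 a)
        (hgemb a) (hgrange a) (hgiff' a) (hJI hXJ')
    · exact lt_of_le_of_lt Cardinal.mk_image_le (hJsetlt a)
  choose Yfam hYI hYnot using hKa
  -- the diagonal union is in the ideal
  have hYbig : (⋃ a, gfn a '' Yfam a) ∈ I := by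
    intro T₀ hT₀
    obtain ⟨b, R', hR'mem, hR'T₀, hR'Tb⟩ := hmax T₀ hT₀
    have hRcl : R' ⊆ clIm (ifn b) (Set.univ : Set (List ℕ)) :=
      subset_clIm_univ hctf (hTfam b) (hiinj b) (himono b) (hiT b) (hg1 b) (hgemb b)
        (hgrange b) (hgiff' b) hR'mem hR'Tb
    obtain ⟨hS₁mem, hS₁cl, -⟩ := pullback hctf (hTfam b) (hiinj b) (himono b) (hiT b)
      (hg1 b) (hgemb b) (hgrange b) (hgiff' b) hctf.univ_mem hR'mem hRcl
    obtain ⟨S₃, hS₃mem, hS₃sub, hS₃d⟩ := hYI b _ hS₁mem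
    refine ⟨clIm (ifn b) S₃, (hgiff' b S₃ (hctf.isTree _ hS₃mem)).1 hS₃mem, ?_, ?_⟩
    · calc clIm (ifn b) S₃ ⊆ clIm (ifn b) {s ∈ Set.univ | ifn b s ∈ R'} := clIm_mono hS₃sub
        _ = R' := hS₁cl
        _ ⊆ T₀ := hR'T₀
    · apply Set.eq_empty_iff_forall_notMem.2
      rintro z ⟨hz1, hz2⟩
      rw [branches_clIm (hiinj b) (himono b) (hiT b) (hg1 b) (hgemb b) (hgrange b)
        (hctf.isTree _ (hTfam b)) (hctf.isTree _ hS₃mem).2] at hz2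
      obtain ⟨y, hyS₃, hgy⟩ := hz2
      obtain ⟨c, hc⟩ := Set.mem_iUnion.1 hz1
      obtain ⟨y', hy'Y, hgy'⟩ := hc
      by_cases hcb : c = b
      · subst hcb
        rw [← hgy] at hgy'
        have : y' = y := (hgemb c).injective hgy'
        subst this
        exact Set.eq_empty_iff_forall_notMem.1 hS₃d y' ⟨hy'Y, hyS₃⟩
      · have h1 : gfn c y' ∈ branches (Tfam c) := by
          rw [← hgrange c]; exact ⟨y', rfl⟩
        have h2 : z ∈ branches (Tfam b) := by
          rw [← hgrange b]; exact ⟨y, hgy⟩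
        rw [hgy'] at h1
        exact Set.eq_empty_iff_forall_notMem.1 (hdisj c b hcb) z ⟨h1, h2⟩
  -- final contradiction
  obtain ⟨X, hXJ, hYX⟩ := hJcof _ hYbig
  obtain ⟨a, hXa⟩ := hcover X hXJ
  have hZa : gfn a '' Yfam a ⊆ X := (Set.subset_iUnion (fun a => gfn a '' Yfam a) a).trans hYX
  exact hYnot a _ ⟨X, hXa, rfl⟩ (fun y hy => hZa ⟨y, hy, rfl⟩)
end

section
/- Let 𝕋 be a collection of trees on ω^{<ω} satisfying: (1) ω^{<ω} ∈ 𝕋; (2) if T ∈ 𝕋 and s ∈ T then T_s = {t ∈ T : s ⊆ t or t ⊆ s} ∈ 𝕋; and (5) every T ∈ 𝕋 contains 𝔠 many trees T_α ∈ 𝕋 (α < 𝔠) with T_α ⊆ T and [T_α] ∩ [T_β] = ∅ for α ≠ β. If 𝕋 has the disjoint maximal antichain property, then cof(t⁰) > 𝔠. -/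
/-- A branchless tree has a maximal node. -/
lemma exists_maximal_node {B : Set (List ℕ)} (hB : IsSeqTree B) (hbr : branches B = ∅) :
    ∃ u ∈ B, ∀ v ∈ B, u <+: v → v = u := by
  classical
  by_contra h
  push_neg at h
  have h' : ∀ u : B, ∃ v : B, u.1 <+: v.1 ∧ v.1 ≠ u.1 := by
    intro u
    obtain ⟨v, hv, hpre, hne⟩ := h u u.2
    exact ⟨⟨v, hv⟩, hpre, hne⟩
  choose F hpre hne using h'
  obtain ⟨s, hs⟩ := hB.1
  have hnil : ([] : List ℕ) ∈ B := hB.2 s hs [] List.nil_prefix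
  let f : ℕ → B := fun n => Nat.rec ⟨[], hnil⟩ (fun _ p => F p) n
  have hfsucc : ∀ n, f (n + 1) = F (f n) := fun _ => rfl
  have hstep : ∀ n, (f n).1 <+: (f (n + 1)).1 := by
    intro n; rw [hfsucc n]; exact hpre (f n)
  have hlt : ∀ n, (f n).1.length < (f (n + 1)).1.length := by
    intro n
    refine lt_of_le_of_ne (hstep n).length_le fun hl => ?_
    exact hne (f n) ((hstep n).eq_of_length hl).symm
  have hchain : ∀ m n, m ≤ n → (f m).1 <+: (f n).1 := by
    intro m n hmn
    induction n with
    | zero =>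
        have : m = 0 := Nat.le_zero.mp hmn
        subst this; exact List.prefix_refl _
    | succ k ih =>
        rcases Nat.lt_or_ge m (k + 1) with hm | hm
        · exact (ih (Nat.lt_succ_iff.mp hm)).trans (hstep k)
        · have : m = k + 1 := le_antisymm hmn hm
          subst this; exact List.prefix_refl _
  have hlen : ∀ n, n ≤ (f n).1.length := by
    intro n
    induction n with
    | zero => exact Nat.zero_le _
    | succ k ih => exact Nat.succ_le_of_lt (lt_of_le_of_lt ih (hlt k))
  set x : ℕ → ℕ := fun i => ((f (i + 1)).1).getD i 0 with hxdef
  have hxr : ∀ n, seqRestrict x n ∈ B := by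
    intro n
    have hkey : seqRestrict x n = (f n).1.take n := by
      apply List.ext_getElem
      · simp [seqRestrict, Nat.min_eq_left (hlen n)]
      · intro i h1 h2
        have hin : i < n := by simpa [seqRestrict] using h1
        have hi : i < (f (i + 1)).1.length := lt_of_lt_of_le (Nat.lt_succ_self i) (hlen (i + 1))
        simp only [seqRestrict, List.getElem_ofFn, List.getElem_take]
        show x i = (f n).1[i]'(lt_of_lt_of_le hin (hlen n) |>.trans_le (le_refl _))
        rw [hxdef]
        simp only
        rw [List.getD_eq_getElem _ _ hi]
        exact (hchain (i + 1) n hin).getElem hi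
    rw [hkey]
    exact hB.2 (f n).1 (f n).2 _ (List.take_prefix n (f n).1)
  have hxb : x ∈ branches B := hxr
  rw [hbr] at hxb
  exact hxb

/-- Let `𝕋` be a collection of trees on `ω^{<ω}` containing the full tree, closed under
restrictions `T_s`, and such that every `T ∈ 𝕋` splits into continuum many members of `𝕋`
with pairwise disjoint branch sets.  If `𝕋` has the disjoint maximal antichain property,
then `cof(t⁰) > 𝔠`. -/
theorem cof_treeIdeal_gt_continuum_of_disjointMaxAntichain (𝕋 : Set (Set (List ℕ)))
    (htree : ∀ T ∈ 𝕋, IsSeqTree T)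
    (huniv : (Set.univ : Set (List ℕ)) ∈ 𝕋)
    (hrestrict : ∀ T ∈ 𝕋, ∀ s ∈ T, {t ∈ T | s <+: t ∨ t <+: s} ∈ 𝕋)
    (hsplit : ∀ T ∈ 𝕋, ∃ (ι : Type) (Tfam : ι → Set (List ℕ)),
      Cardinal.mk ι = Cardinal.continuum ∧
      (∀ a : ι, Tfam a ∈ 𝕋 ∧ Tfam a ⊆ T) ∧
      (∀ a b : ι, a ≠ b → branches (Tfam a) ∩ branches (Tfam b) = ∅))
    (hdmap : DisjointMaxAntichainProp 𝕋) :
    Cardinal.continuum < idealCof (treeIdeal 𝕋) := by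
  classical
  obtain ⟨ι, Tfam, hmk, hmem, hAC, hmaxi, hdisj⟩ := hdmap
  -- the set of "bad" indices: those whose tree contains a branchless member of 𝕋
  set Bad : Set ι := {a | ∃ B ∈ 𝕋, B ⊆ Tfam a ∧ branches B = ∅} with hBadDef
  -- for each bad index, produce a node pinning it down
  have hmaxnode : ∀ a : Bad, ∃ u : List ℕ, u ∈ Tfam (a : ι) ∧ {t | t <+: u} ∈ 𝕋 := by
    rintro ⟨a, B, hB𝕋, hBsub, hBbr⟩
    obtain ⟨u, huB, humax⟩ := exists_maximal_node (htree B hB𝕋) hBbr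
    have hch : {t ∈ B | u <+: t ∨ t <+: u} = {t | t <+: u} := by
      ext t
      constructor
      · rintro ⟨htB, h | h⟩
        · rw [humax t htB h]; exact List.prefix_refl u
        · exact h
      · intro ht
        exact ⟨(htree B hB𝕋).2 u huB t ht, Or.inr ht⟩
    refine ⟨u, hBsub huB, ?_⟩
    rw [← hch]
    exact hrestrict B hB𝕋 u huB
  choose U hU1 hU2 using hmaxnode
  have hUinj : Function.Injective U := by
    intro a b hab
    by_contra hne
    have hne' : (a : ι) ≠ (b : ι) := fun h => hne (Subtype.ext h)
    refine hAC (a : ι) (b : ι) hne' ⟨{t | t <+: U a}, hU2 a, ?_, ?_⟩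
    · intro t ht
      exact (htree _ (hmem (a : ι))).2 (U a) (hU1 a) t ht
    · intro t ht
      rw [hab] at ht
      exact (htree _ (hmem (b : ι))).2 (U b) (hU1 b) t ht
  have hBadCt : Cardinal.mk Bad ≤ Cardinal.aleph0 := by
    rw [Cardinal.mk_le_aleph0_iff]
    exact hUinj.countable
  have hsum : Cardinal.mk Bad + Cardinal.mk ↥(Badᶜ) = Cardinal.mk ι := Cardinal.mk_sum_compl Bad
  have hGood : Cardinal.mk ↥(Badᶜ) = Cardinal.continuum := by
    rcases lt_or_ge (Cardinal.mk ↥(Badᶜ)) Cardinal.continuum with h | h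
    · exfalso
      have hlt : Cardinal.mk Bad + Cardinal.mk ↥(Badᶜ) < Cardinal.continuum :=
        Cardinal.add_lt_of_lt Cardinal.aleph0_le_continuum
          (lt_of_le_of_lt hBadCt Cardinal.aleph0_lt_continuum) h
      rw [hsum, hmk] at hlt
      exact lt_irrefl _ hlt
    · exact le_antisymm (by rw [← hmk]; exact Cardinal.mk_set_le _) h
  -- main claim: every cardinal in the cofinality set exceeds 𝔠
  have hclaim : ∀ c ∈ {c : Cardinal | ∃ J ⊆ treeIdeal 𝕋, Cardinal.mk J = c ∧
      ∀ X ∈ treeIdeal 𝕋, ∃ Y ∈ J, X ⊆ Y}, Cardinal.continuum < c := by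
    rintro c ⟨J, hJsub, hJmk, hJcof⟩
    by_contra hle
    push_neg at hle
    have hJle : Cardinal.mk J ≤ Cardinal.mk ↥(Badᶜ) := by
      rw [hGood, hJmk]; exact hle
    obtain ⟨g⟩ := Cardinal.le_def _ _ |>.mp hJle
    -- pick diagonal points
    have hpick : ∀ Y : J, ∃ x : ℕ → ℕ,
        x ∈ branches (Tfam ((g Y : ↥(Badᶜ)) : ι)) ∧ x ∉ (Y : Set (ℕ → ℕ)) := by
      intro Y
      have hY : (Y : Set (ℕ → ℕ)) ∈ treeIdeal 𝕋 := hJsub Y.2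
      obtain ⟨S, hS𝕋, hSsub, hSdisj⟩ := hY (Tfam ((g Y : ↥(Badᶜ)) : ι)) (hmem _)
      have hSne : branches S ≠ ∅ := by
        intro hbr
        exact (g Y).2 ⟨S, hS𝕋, hSsub, hbr⟩
      obtain ⟨x, hx⟩ := Set.nonempty_iff_ne_empty.mpr hSne
      refine ⟨x, branches_mono hSsub hx, fun hxY => ?_⟩
      have : x ∈ (Y : Set (ℕ → ℕ)) ∩ branches S := ⟨hxY, hx⟩
      rw [hSdisj] at this
      exact this
    choose xf hx1 hx2 using hpick
    set X : Set (ℕ → ℕ) := Set.range xf with hXdef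
    have hX : X ∈ treeIdeal 𝕋 := by
      intro T hT
      obtain ⟨a, R, hR𝕋, hRT, hRTa⟩ := hmaxi T hT
      -- X meets [R] in at most one point
      have hss : ∀ z ∈ X ∩ branches R, ∀ w ∈ X ∩ branches R, z = w := by
        rintro z ⟨⟨Y₁, rfl⟩, hz⟩ w ⟨⟨Y₂, rfl⟩, hw⟩
        have key : ∀ Y : J, xf Y ∈ branches R → ((g Y : ↥(Badᶜ)) : ι) = a := by
          intro Y hYb
          by_contra hne
          have hd := hdisj _ a hne
          have : xf Y ∈ branches (Tfam ((g Y : ↥(Badᶜ)) : ι)) ∩ branches (Tfam a) :=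
            ⟨hx1 Y, branches_mono hRTa hYb⟩
          rw [hd] at this
          exact this
        have h1 := key Y₁ hz
        have h2 := key Y₂ hw
        have : g Y₁ = g Y₂ := Subtype.ext (h1.trans h2.symm)
        rw [g.injective this]
      obtain ⟨κ, P, hκ, hP, hPdisj⟩ := hsplit R hR𝕋
      have hκnt : Nontrivial κ := by
        rw [← Cardinal.one_lt_iff_nontrivial, hκ]
        exact lt_trans Cardinal.one_lt_aleph0 Cardinal.aleph0_lt_continuum
      obtain ⟨c₁, c₂, hcc⟩ := hκnt.exists_pair_ne
      by_cases hc : (X ∩ branches (P c₁)).Nonempty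
      · refine ⟨P c₂, (hP c₂).1, (hP c₂).2.trans hRT, ?_⟩
        obtain ⟨z, hzX, hzb⟩ := hc
        by_contra hne
        obtain ⟨w, hwX, hwb⟩ := Set.nonempty_iff_ne_empty.mpr hne
        have hz' : z ∈ X ∩ branches R := ⟨hzX, branches_mono (hP c₁).2 hzb⟩
        have hw' : w ∈ X ∩ branches R := ⟨hwX, branches_mono (hP c₂).2 hwb⟩
        have hzw : z = w := hss z hz' w hw'
        have : z ∈ branches (P c₁) ∩ branches (P c₂) := ⟨hzb, hzw ▸ hwb⟩
        rw [hPdisj c₁ c₂ hcc] at this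
        exact this
      · exact ⟨P c₁, (hP c₁).1, (hP c₁).2.trans hRT,
          Set.not_nonempty_iff_eq_empty.mp hc⟩
    obtain ⟨Y₀, hY₀J, hXY₀⟩ := hJcof X hX
    exact hx2 ⟨Y₀, hY₀J⟩ (hXY₀ ⟨⟨Y₀, hY₀J⟩, rfl⟩)
  -- conclude
  have hne : {c : Cardinal | ∃ J ⊆ treeIdeal 𝕋, Cardinal.mk J = c ∧
      ∀ X ∈ treeIdeal 𝕋, ∃ Y ∈ J, X ⊆ Y}.Nonempty :=
    ⟨_, treeIdeal 𝕋, subset_rfl, rfl, fun X hX => ⟨X, hX, subset_rfl⟩⟩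
  exact hclaim _ (csInf_mem hne)
end

section
/- Silver forcing has the incompatibility shrinking property: for every Silver condition T, every cardinal μ < 𝔠, and every family (S_α : α < μ) of Silver conditions each incompatible with T, there is a Silver condition T' ⊆ T such that [T'] ∩ [S_α] = ∅ for all α < μ. -/
/-- The restriction `x↾n` of `x ∈ 2^ω` to its first `n` values, as a finite binary sequence. -/
def seqRestrict2 (x : ℕ → Bool) (n : ℕ) : List Bool := List.ofFn fun i : Fin n => x i

/-- A tree on `2`: a nonempty set of finite binary sequences closed under initial segments. -/
def IsSeqTree2 (T : Set (List Bool)) : Prop :=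
  T.Nonempty ∧ ∀ s ∈ T, ∀ t : List Bool, t <+: s → t ∈ T

/-- `[T]`, the set of branches of a tree `T ⊆ 2^{<ω}`. -/
def branches2 (T : Set (List Bool)) : Set (ℕ → Bool) := {x | ∀ n : ℕ, seqRestrict2 x n ∈ T}

/-- The tree of a partial function `p : ω → 2`: finite binary sequences agreeing with `p`
on the domain of `p`. -/
def silverTree (p : ℕ → Option Bool) : Set (List Bool) :=
  {s | ∀ (n : ℕ) (h : n < s.length) (b : Bool), p n = some b → s.get ⟨n, h⟩ = b}

/-- A Silver condition: a tree determined by a partial function `p : ω → 2` whose domain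
has infinite complement. -/
def IsSilver (T : Set (List Bool)) : Prop :=
  ∃ p : ℕ → Option Bool, {n : ℕ | p n = none}.Infinite ∧ T = silverTree p

lemma branches_silver (r : ℕ → Option Bool) (x : ℕ → Bool) :
    x ∈ branches2 (silverTree r) ↔ ∀ n b, r n = some b → x n = b := by
  constructor
  · intro hx n b hb
    have h := hx (n+1) n (by simp [seqRestrict2]) b hb
    unfold seqRestrict2 at h
    rw [List.get_ofFn] at h
    simpa using h
  · intro h n m hm b hb
    have := h m b hb
    simp only [seqRestrict2] at hm ⊢
    simp only [List.get_ofFn]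
    simpa using this

lemma silverTree_mono {p r : ℕ → Option Bool}
    (h : ∀ n b, p n = some b → r n = some b) : silverTree r ⊆ silverTree p := by
  intro s hs n hn b hb
  exact hs n hn b (h n b hb)

/-- Silver forcing has the incompatibility shrinking property: for every Silver condition `T`
and every family of fewer than continuum many Silver conditions each incompatible with `T`,
there is a Silver condition `T' ⊆ T` whose branch set avoids all their branch sets. -/
theorem silver_incompatShrinking (T : Set (List Bool)) (hT : IsSilver T)
    (ι : Type) (hcard : Cardinal.mk ι < Cardinal.continuum)
    (S : ι → Set (List Bool)) (hS : ∀ a : ι, IsSilver (S a))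
    (hincompat : ∀ a : ι, ¬ ∃ R : Set (List Bool), IsSilver R ∧ R ⊆ T ∧ R ⊆ S a) :
    ∃ T' : Set (List Bool), IsSilver T' ∧ T' ⊆ T ∧
      ∀ a : ι, branches2 T' ∩ branches2 (S a) = ∅ := by
  classical
  obtain ⟨p, hpinf, rfl⟩ := hT
  choose q hqinf hqeq using hS
  -- dichotomy from incompatibility
  have hcases : ∀ a : ι, (∃ n b c, p n = some b ∧ q a n = some c ∧ b ≠ c) ∨
      {n | p n = none ∧ q a n = none}.Finite := by
    intro a
    by_contra hcon
    push_neg at hcon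
    obtain ⟨h1, h2⟩ := hcon
    set r : ℕ → Option Bool := fun n => match hn : p n with
      | some b => some b
      | none => q a n with hrdef
    have hr1 : ∀ n b, p n = some b → r n = some b := by
      intro n b h; simp only [hrdef]; split <;> simp_all
    have hr2 : ∀ n b, q a n = some b → r n = some b := by
      intro n b h; simp only [hrdef]; split
      · rename_i c hc
        have := h1 n c b hc h
        simp [this]
      · exact h
    have hrnone : {n | r n = none} = {n | p n = none ∧ q a n = none} := by
      ext n
      simp only [Set.mem_setOf_eq, hrdef]
      rcases hn : p n with _ | c <;> simp [hn]
    refine hincompat a ⟨silverTree r, ⟨r, ?_, rfl⟩, silverTree_mono hr1, ?_⟩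
    · rw [hrnone]; exact h2
    · rw [hqeq a]; exact silverTree_mono hr2
  -- enumeration of the holes of p
  set E : ℕ → ℕ := fun k => (Set.Infinite.natEmbedding _ hpinf k : ℕ) with hEdef
  have hEmem : ∀ k, p (E k) = none := fun k => (Set.Infinite.natEmbedding _ hpinf k).2
  have hEinj : Function.Injective E := fun k l h =>
    (Set.Infinite.natEmbedding _ hpinf).injective (Subtype.ext h)
  -- the bad sets
  set Bad : ι → Set (ℕ → Bool) :=
    fun a => {y | ∀ k b, q a (E (2*k)) = some b → y k = b} with hBaddef
  set C : Set ι := {a | {n | p n = none ∧ q a n = none}.Finite} with hCdef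
  have hBadfin : ∀ a ∈ C, (Bad a).Finite := by
    intro a ha
    have hF : {k | q a (E (2*k)) = none}.Finite := by
      have : {k | q a (E (2*k)) = none}
          = (fun k => E (2*k)) ⁻¹' {n | p n = none ∧ q a n = none} := by
        ext k; simp [Set.mem_setOf_eq, hEmem]
      rw [this]
      exact Set.Finite.preimage (Set.injOn_of_injective
        (fun k l h => by have := hEinj h; omega)) ha
    rw [← Set.finite_coe_iff]
    have := hF.to_subtype
    refine Finite.of_injective
      (fun y : ↥(Bad a) => fun k : ↥{k | q a (E (2*k)) = none} => y.1 k.1) ?_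
    intro y1 y2 h
    ext k
    by_cases hk : q a (E (2*k)) = none
    · exact congrFun h ⟨k, hk⟩
    · obtain ⟨b, hb⟩ := Option.ne_none_iff_exists'.1 hk
      rw [y1.2 k b hb, y2.2 k b hb]
  -- a real avoiding all bad sets
  have hlt : Cardinal.mk (↥(⋃ a : ↥C, Bad a.1)) < Cardinal.continuum := by
    calc Cardinal.mk (↥(⋃ a : ↥C, Bad a.1))
          ≤ Cardinal.sum fun a : ↥C => Cardinal.mk (Bad a.1) :=
          Cardinal.mk_iUnion_le_sum_mk
      _ ≤ Cardinal.sum fun _ : ↥C => Cardinal.aleph0 :=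
          Cardinal.sum_le_sum _ _ fun a => (hBadfin a.1 a.2).lt_aleph0.le
      _ = Cardinal.mk (↥C) * Cardinal.aleph0 := Cardinal.sum_const' _ _
      _ < Cardinal.continuum :=
          Cardinal.mul_lt_of_lt Cardinal.aleph0_le_continuum
            (lt_of_le_of_lt (Cardinal.mk_subtype_le _) hcard)
            Cardinal.aleph0_lt_continuum
  have hmk : Cardinal.mk (ℕ → Bool) = Cardinal.continuum := by
    rw [Cardinal.mk_arrow]
    simp [Cardinal.mk_bool, Cardinal.mk_nat, Cardinal.two_power_aleph0]
  have hne : (⋃ a : ↥C, Bad a.1) ≠ Set.univ := by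
    intro h
    rw [h, Cardinal.mk_univ, hmk] at hlt
    exact lt_irrefl _ hlt
  obtain ⟨y, hy⟩ := Set.ne_univ_iff_exists_notMem _ |>.1 hne
  -- the new condition
  set p' : ℕ → Option Bool :=
    fun n => if h : ∃ k, E (2*k) = n then some (y h.choose) else p n with hp'def
  have hp'E : ∀ k, p' (E (2*k)) = some (y k) := by
    intro k
    have hex : ∃ k', E (2*k') = E (2*k) := ⟨k, rfl⟩
    have hch : hex.choose = k := by
      have := hEinj hex.choose_spec; omega
    simp only [hp'def, dif_pos hex, hch]
  have hp'ext : ∀ n b, p n = some b → p' n = some b := by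
    intro n b h
    have : ¬ ∃ k, E (2*k) = n := by
      rintro ⟨k, rfl⟩; rw [hEmem (2*k)] at h; cases h
    simp only [hp'def, dif_neg this]; exact h
  have hp'odd : ∀ k, p' (E (2*k+1)) = none := by
    intro k
    have : ¬ ∃ k', E (2*k') = E (2*k+1) := by
      rintro ⟨k', h⟩; have := hEinj h; omega
    simp only [hp'def, dif_neg this]; exact hEmem _
  refine ⟨silverTree p', ⟨p', ?_, rfl⟩, silverTree_mono hp'ext, ?_⟩
  · refine Set.Infinite.mono ?_
      (Set.infinite_range_of_injective (f := fun k => E (2*k+1))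
        (fun k l h => by have := hEinj h; omega))
    rintro _ ⟨k, rfl⟩
    exact hp'odd k
  · intro a
    rw [Set.eq_empty_iff_forall_notMem]
    rintro x ⟨hx1, hx2⟩
    rw [hqeq a] at hx2
    rw [branches_silver] at hx1 hx2
    rcases hcases a with ⟨n, b, c, hb, hc, hbc⟩ | hfin
    · exact hbc (by rw [← hx1 n b (hp'ext n b hb), hx2 n c hc])
    · have hyBad : y ∉ Bad a := fun hmem => hy (Set.mem_iUnion.2 ⟨⟨a, hfin⟩, hmem⟩)
      simp only [hBaddef, Set.mem_setOf_eq] at hyBad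
      push_neg at hyBad
      obtain ⟨k, b, hb, hne'⟩ := hyBad
      exact hne' (by rw [← hx1 _ _ (hp'E k), hx2 _ _ hb])
end

section
/- The cofinality of the cardinal cof(s⁰) is strictly greater than 𝔠, where s⁰ is the Marczewski ideal: cf(cof(s⁰)) > 2^{ℵ₀}. -/
/-- A perfect tree (Sacks condition): every node has an extension in the tree both of whose
immediate successors are in the tree. -/
def PerfectTree (T : Set (List Bool)) : Prop :=
  IsSeqTree2 T ∧ ∀ s ∈ T, ∃ t ∈ T, s <+: t ∧ t ++ [false] ∈ T ∧ t ++ [true] ∈ T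

/-- The cofinality `cof(I)` of an ideal `I` on `2^ω`: the least cardinality of a family
`J ⊆ I` such that every member of `I` is contained in a member of `J`. -/
noncomputable def idealCof2 (I : Set (Set (ℕ → Bool))) : Cardinal :=
  sInf {c : Cardinal | ∃ J ⊆ I, Cardinal.mk J = c ∧ ∀ X ∈ I, ∃ Y ∈ J, X ⊆ Y}

/-- The Marczewski ideal `s⁰`: all `X ⊆ 2^ω` such that every perfect tree has a perfect
subtree whose branch set avoids `X`. -/
def marczewskiIdeal : Set (Set (ℕ → Bool)) :=
  {X | ∀ T : Set (List Bool), PerfectTree T →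
    ∃ S : Set (List Bool), PerfectTree S ∧ S ⊆ T ∧ X ∩ branches2 S = ∅}


open Set





namespace MZ

abbrev C2 := ℕ → Bool

@[simp] lemma length_seqRestrict2 (x : C2) (n : ℕ) : (seqRestrict2 x n).length = n := by
  simp [seqRestrict2]

lemma getElem_seqRestrict2 (x : C2) {n k : ℕ} (h : k < n) :
    (seqRestrict2 x n)[k]'(by simpa using h) = x k := by
  simp [seqRestrict2]

lemma seqRestrict2_eq_iff {x y : C2} {n : ℕ} :
    seqRestrict2 x n = seqRestrict2 y n ↔ ∀ k < n, x k = y k := by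
  constructor
  · intro h k hk
    have := congrArg (fun l => l[k]?) h
    simpa [seqRestrict2, hk] using this
  · intro h
    apply List.ofFn_inj.mpr
    funext i
    exact h i i.2

lemma take_seqRestrict2 (x : C2) {m n : ℕ} (h : m ≤ n) :
    (seqRestrict2 x n).take m = seqRestrict2 x m := by
  apply List.ext_getElem
  · simp [h]
  · intro k h1 h2
    have hk : k < m := by simpa using h2
    rw [List.getElem_take]
    rw [getElem_seqRestrict2 x (lt_of_lt_of_le hk h), getElem_seqRestrict2 x hk]

lemma seqRestrict2_prefix (x : C2) {m n : ℕ} (h : m ≤ n) :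
    seqRestrict2 x m <+: seqRestrict2 x n := by
  rw [← take_seqRestrict2 x h]; exact List.take_prefix _ _

lemma seqRestrict2_succ (x : C2) (n : ℕ) :
    seqRestrict2 x (n + 1) = seqRestrict2 x n ++ [x n] := by
  rw [seqRestrict2, List.ofFn_succ']
  simp [seqRestrict2, List.concat_eq_append]

/-- cylinder -/
def cyl (x : C2) (n : ℕ) : Set C2 := {y | seqRestrict2 y n = seqRestrict2 x n}

lemma mem_cyl_self (x : C2) (n : ℕ) : x ∈ cyl x n := rfl

lemma cyl_eq (x : C2) (n : ℕ) : cyl x n = {y | ∀ k < n, y k = x k} := by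
  ext y; exact seqRestrict2_eq_iff

lemma isOpen_cyl (x : C2) (n : ℕ) : IsOpen (cyl x n) := by
  rw [cyl_eq]
  have : {y : C2 | ∀ k < n, y k = x k} = ⋂ k ∈ Finset.range n, (fun y : C2 => y k) ⁻¹' {x k} := by
    ext y; simp
  rw [this]
  exact isOpen_biInter_finset fun k _ => (isOpen_discrete _).preimage (continuous_apply k)

lemma cyl_mem_nhds (x : C2) (n : ℕ) : cyl x n ∈ nhds x :=
  (isOpen_cyl x n).mem_nhds (mem_cyl_self x n)

lemma mem_cyl_apply {x y : C2} {n k : ℕ} (h : y ∈ cyl x n) (hk : k < n) : y k = x k := by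
  rw [cyl_eq] at h; exact h k hk

lemma branches2_closed (T : Set (List Bool)) : IsClosed (branches2 T) := by
  rw [← isOpen_compl_iff, isOpen_iff_forall_mem_open]
  intro x hx
  simp only [mem_compl_iff, branches2, mem_setOf_eq, not_forall] at hx
  obtain ⟨n, hn⟩ := hx
  refine ⟨cyl x n, ?_, isOpen_cyl x n, mem_cyl_self x n⟩
  intro y hy
  simp only [mem_compl_iff, branches2, mem_setOf_eq, not_forall]
  exact ⟨n, by rwa [hy]⟩

lemma branches2_mono {S T : Set (List Bool)} (h : S ⊆ T) : branches2 S ⊆ branches2 T :=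
  fun _ hx n => h (hx n)

end MZ

namespace MZ

section Branch

variable {T : Set (List Bool)} (hT : PerfectTree T)

/-- one-step proper extension inside a perfect tree -/
noncomputable def pext (hT : PerfectTree T) (s : {t : List Bool // t ∈ T}) :
    {t : List Bool // t ∈ T} :=
  ⟨(hT.2 s.1 s.2).choose ++ [false], (hT.2 s.1 s.2).choose_spec.2.2.1⟩

lemma pext_prefix (s : {t : List Bool // t ∈ T}) : s.1 <+: (pext hT s).1 := by
  have h := (hT.2 s.1 s.2).choose_spec.2.1
  exact h.trans ⟨[false], rfl⟩

lemma pext_length (s : {t : List Bool // t ∈ T}) : s.1.length < (pext hT s).1.length := by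
  have h := (hT.2 s.1 s.2).choose_spec.2.1
  have := h.length_le
  simp only [pext, List.length_append, List.length_cons, List.length_nil]
  omega

/-- chain of extensions starting at `s` -/
noncomputable def pchain (hT : PerfectTree T) (s : {t : List Bool // t ∈ T}) :
    ℕ → {t : List Bool // t ∈ T}
  | 0 => s
  | n + 1 => pext hT (pchain hT s n)

lemma pchain_prefix (s) {m n : ℕ} (h : m ≤ n) :
    (pchain hT s m).1 <+: (pchain hT s n).1 := by
  induction n with
  | zero => simp_all
  | succ n ih =>
    rcases Nat.lt_or_ge m (n+1) with h' | h'
    · exact (ih (by omega)).trans (pext_prefix hT _)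
    · have : m = n + 1 := by omega
      subst this; rfl

lemma pchain_length (s) (n : ℕ) : s.1.length + n ≤ (pchain hT s n).1.length := by
  induction n with
  | zero => simp [pchain]
  | succ n ih =>
    have := pext_length hT (pchain hT s n)
    simp only [pchain]
    omega

/-- a branch of `T` through `s` -/
noncomputable def pbranch (hT : PerfectTree T) (s : {t : List Bool // t ∈ T}) : C2 :=
  fun k => (pchain hT s (k + 1)).1.getD k false

lemma seqRestrict2_pbranch (s) (n : ℕ) :
    seqRestrict2 (pbranch hT s) n = (pchain hT s n).1.take n := by
  have hlen : n ≤ (pchain hT s n).1.length := le_trans (by omega) (pchain_length hT s n)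
  apply List.ext_getElem
  · rw [length_seqRestrict2, List.length_take]; omega
  · intro k h1 h2
    have hk : k < n := by simpa using h1
    have hpre : (pchain hT s (k+1)).1 <+: (pchain hT s n).1 := pchain_prefix hT s (by omega)
    have hklen : k < (pchain hT s (k+1)).1.length := by
      have := pchain_length hT s (k+1); omega
    rw [getElem_seqRestrict2 _ hk, List.getElem_take]
    show pbranch hT s k = _
    rw [pbranch, List.getD_eq_getElem _ _ hklen]
    exact hpre.getElem hklen

lemma pbranch_mem (s) : pbranch hT s ∈ branches2 T := by
  intro n
  rw [seqRestrict2_pbranch hT s n]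
  exact hT.1.2 _ (pchain hT s n).2 _ (List.take_prefix _ _)

lemma pbranch_through (s : {t : List Bool // t ∈ T}) :
    seqRestrict2 (pbranch hT s) s.1.length = s.1 := by
  rw [seqRestrict2_pbranch hT s s.1.length]
  have hpre : (pchain hT s 0).1 <+: (pchain hT s s.1.length).1 :=
    pchain_prefix hT s (by omega)
  have : (pchain hT s 0).1 = s.1 := rfl
  rw [this] at hpre
  exact (List.prefix_iff_eq_take.mp hpre).symm

include hT in
lemma exists_branch_through {s : List Bool} (hs : s ∈ T) :
    ∃ x ∈ branches2 T, seqRestrict2 x s.length = s :=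
  ⟨pbranch hT ⟨s, hs⟩, pbranch_mem hT _, pbranch_through hT ⟨s, hs⟩⟩

include hT in
lemma branches2_nonempty : (branches2 T).Nonempty := by
  obtain ⟨s, hs⟩ := hT.1.1
  obtain ⟨x, hx, -⟩ := exists_branch_through hT hs
  exact ⟨x, hx⟩

end Branch

end MZ

namespace MZ

open Filter Topology

lemma tendsto_of_cyl (x : C2) (y : ℕ → C2) (h : ∀ n, y n ∈ cyl x n) :
    Tendsto y atTop (𝓝 x) := by
  rw [tendsto_pi_nhds]
  intro k
  apply Filter.Tendsto.congr' _ (tendsto_const_nhds (x := x k))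
  rw [Filter.EventuallyEq, eventually_atTop]
  exact ⟨k + 1, fun n hn => (mem_cyl_apply (h n) (by omega)).symm⟩

section PerfB

variable {T : Set (List Bool)} (hT : PerfectTree T)

include hT in
lemma exists_ne_branch_in_cyl {x : C2} (hx : x ∈ branches2 T) (n : ℕ) :
    ∃ y ∈ branches2 T, y ∈ cyl x n ∧ y ≠ x := by
  have hs : seqRestrict2 x n ∈ T := hx n
  obtain ⟨t, htT, hst, hf, htr⟩ := hT.2 _ hs
  set b := ! x t.length with hb
  have htb : t ++ [b] ∈ T := by cases hxt : x t.length <;> simp [hb, hxt, hf, htr]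
  obtain ⟨w, hw, hwt⟩ := exists_branch_through hT htb
  have hlen : (t ++ [b]).length = t.length + 1 := by simp
  have hn_le : n ≤ t.length := by
    have := hst.length_le; simpa using this
  refine ⟨w, hw, ?_, ?_⟩
  · -- w ∈ cyl x n
    show seqRestrict2 w n = seqRestrict2 x n
    have h1 : seqRestrict2 w n = (t ++ [b]).take n := by
      rw [← hwt]
      exact (take_seqRestrict2 w (by rw [hlen]; omega)).symm
    rw [h1, List.take_append_of_le_length hn_le]
    have : seqRestrict2 x n = t.take n := by
      have h2 := List.prefix_iff_eq_take.mp hst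
      rw [length_seqRestrict2] at h2
      exact h2
    rw [this]
  · -- w ≠ x
    intro hcontr
    subst hcontr
    have : t ++ [b] = seqRestrict2 w (t.length + 1) := by rw [← hlen, hwt]
    rw [seqRestrict2_succ] at this
    have hpref : t = seqRestrict2 w t.length :=
      List.append_inj_left this (by rw [length_seqRestrict2])
    have hlast : [b] = [w t.length] :=
      List.append_inj_right this (by rw [length_seqRestrict2])
    have : b = w t.length := by simpa using hlast
    rw [hb] at this
    cases hxt : w t.length <;> simp [hxt] at this

include hT in
lemma perfect_branches2 : Perfect (branches2 T) := by
  refine ⟨branches2_closed T, preperfect_iff_nhds.mpr ?_⟩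
  intro x hx U hU
  have hy : ∀ n, ∃ y ∈ branches2 T, y ∈ cyl x n ∧ y ≠ x :=
    fun n => exists_ne_branch_in_cyl hT hx n
  choose y hymem hycyl hyne using hy
  have htd : Tendsto y atTop (𝓝 x) := tendsto_of_cyl x y hycyl
  have hev : ∀ᶠ n in atTop, y n ∈ U := htd.eventually_mem hU
  obtain ⟨n, hn⟩ := hev.exists
  exact ⟨y n, ⟨hn, hymem n⟩, hyne n⟩

end PerfB

/-- the tree of a set of branches -/
def treeOf (Q : Set C2) : Set (List Bool) := {s | ∃ x ∈ Q, seqRestrict2 x s.length = s}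

lemma seqRestrict2_mem_treeOf {Q : Set C2} {x : C2} (hx : x ∈ Q) (n : ℕ) :
    seqRestrict2 x n ∈ treeOf Q := ⟨x, hx, by rw [length_seqRestrict2]⟩

lemma isSeqTree2_treeOf {Q : Set C2} (hQ : Q.Nonempty) : IsSeqTree2 (treeOf Q) := by
  obtain ⟨x, hx⟩ := hQ
  constructor
  · exact ⟨seqRestrict2 x 0, seqRestrict2_mem_treeOf hx 0⟩
  · rintro s ⟨y, hy, hys⟩ t hts
    refine ⟨y, hy, ?_⟩
    have hlen : t.length ≤ s.length := hts.length_le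
    have h2 := List.prefix_iff_eq_take.mp hts
    rw [← hys, take_seqRestrict2 y hlen] at h2
    exact h2.symm

lemma treeOf_subset {Q : Set C2} {T : Set (List Bool)} (hQ : Q ⊆ branches2 T) :
    treeOf Q ⊆ T := by
  rintro s ⟨x, hx, he⟩
  exact he ▸ (hQ hx s.length)

lemma branches2_treeOf {Q : Set C2} (hQc : IsClosed Q) : branches2 (treeOf Q) = Q := by
  apply Set.Subset.antisymm
  · intro x hx
    have hy : ∀ n, ∃ y ∈ Q, y ∈ cyl x n := by
      intro n
      obtain ⟨y, hy, hye⟩ := hx n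
      rw [length_seqRestrict2] at hye
      exact ⟨y, hy, hye⟩
    choose y hymem hycyl using hy
    exact hQc.mem_of_tendsto (tendsto_of_cyl x y hycyl)
      (Filter.Eventually.of_forall hymem)
  · intro x hx n
    exact seqRestrict2_mem_treeOf hx n

lemma perfectTree_treeOf {Q : Set C2} (hQ : Perfect Q) (hne : Q.Nonempty) :
    PerfectTree (treeOf Q) := by
  refine ⟨isSeqTree2_treeOf hne, ?_⟩
  rintro s ⟨x, hx, hxs⟩
  obtain ⟨y, ⟨hycyl, hyQ⟩, hyne⟩ :=
    (preperfect_iff_nhds.mp hQ.acc) x hx (cyl x s.length) (cyl_mem_nhds x s.length)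
  have hexk : ∃ k, x k ≠ y k := by
    by_contra hc
    push_neg at hc
    exact hyne (funext fun k => hc k).symm
  classical
  set m := Nat.find hexk with hm
  have hmWit : x m ≠ y m := Nat.find_spec hexk
  have hmmin : ∀ k < m, x k = y k := fun k hk => by
    by_contra hc
    exact Nat.find_min hexk hk hc
  have hsm : s.length ≤ m := by
    by_contra hc
    push_neg at hc
    exact hmWit (mem_cyl_apply hycyl hc).symm
  refine ⟨seqRestrict2 x m, seqRestrict2_mem_treeOf hx m, ?_, ?_⟩
  · rw [← hxs]
    exact seqRestrict2_prefix x hsm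
  · have hxy : seqRestrict2 x m = seqRestrict2 y m :=
      seqRestrict2_eq_iff.mpr hmmin
    have h1 : seqRestrict2 x m ++ [x m] ∈ treeOf Q := by
      rw [← seqRestrict2_succ]
      exact seqRestrict2_mem_treeOf hx (m+1)
    have h2 : seqRestrict2 x m ++ [y m] ∈ treeOf Q := by
      rw [hxy, ← seqRestrict2_succ]
      exact seqRestrict2_mem_treeOf hyQ (m+1)
    cases hxm : x m
    · have hym : y m = true := by
        cases hym : y m
        · rw [hxm, hym] at hmWit; simp at hmWit
        · rfl
      rw [hxm] at h1; rw [hym] at h2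
      exact ⟨h1, h2⟩
    · have hym : y m = false := by
        cases hym : y m
        · rfl
        · rw [hxm, hym] at hmWit; simp at hmWit
      rw [hxm] at h1; rw [hym] at h2
      exact ⟨h2, h1⟩

end MZ


namespace MZ

open Filter Topology Cardinal

/-- interleaving map: even coordinates from `y`, odd coordinates from `z` -/
def itl (z y : C2) : C2 := fun n => if n % 2 = 0 then y (n / 2) else z (n / 2)

def oddPart (x : C2) : C2 := fun n => x (2 * n + 1)

def evenPart (x : C2) : C2 := fun n => x (2 * n)

def Pz (z : C2) : Set C2 := oddPart ⁻¹' {z}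

lemma oddPart_itl (z y : C2) : oddPart (itl z y) = z := by
  funext n
  have h1 : (2 * n + 1) % 2 = 1 := by omega
  have h2 : (2 * n + 1) / 2 = n := by omega
  simp [oddPart, itl, h1, h2]

lemma evenPart_itl (z y : C2) : evenPart (itl z y) = y := by
  funext n
  have h1 : (2 * n) % 2 = 0 := by omega
  have h2 : (2 * n) / 2 = n := by omega
  simp [evenPart, itl, h1, h2]

lemma itl_evenPart {z x : C2} (hx : x ∈ Pz z) : itl z (evenPart x) = x := by
  have hz : oddPart x = z := hx
  funext n
  simp only [itl, evenPart]
  rcases Nat.mod_two_eq_zero_or_one n with h1 | h1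
  · have h2 : 2 * (n / 2) = n := by omega
    rw [if_pos h1, h2]
  · have h2 : 2 * (n / 2) + 1 = n := by omega
    rw [if_neg (by omega), ← hz]
    show oddPart x (n / 2) = x n
    rw [oddPart, h2]

lemma itl_mem_Pz (z y : C2) : itl z y ∈ Pz z := by
  simp [Pz, Set.mem_preimage, oddPart_itl]

lemma itl_injective (z : C2) : Function.Injective (itl z) := by
  intro a b h
  have := congrArg evenPart h
  rwa [evenPart_itl, evenPart_itl] at this

lemma range_itl (z : C2) : Set.range (itl z) = Pz z := by
  apply Set.Subset.antisymm
  · rintro _ ⟨y, rfl⟩; exact itl_mem_Pz z y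
  · intro x hx; exact ⟨evenPart x, itl_evenPart hx⟩

lemma continuous_itl (z : C2) : Continuous (itl z) := by
  apply continuous_pi
  intro n
  unfold itl
  by_cases h : n % 2 = 0
  · simp only [h, if_pos rfl]; exact continuous_apply _
  · simp only [h, if_neg h]; exact continuous_const

lemma continuous_oddPart : Continuous oddPart := by
  apply continuous_pi; intro n; exact continuous_apply _

lemma isClosed_Pz (z : C2) : IsClosed (Pz z) :=
  IsClosed.preimage continuous_oddPart isClosed_singleton

lemma Pz_disjoint {z z' : C2} (h : z ≠ z') : Pz z ∩ Pz z' = ∅ := by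
  ext x
  simp only [Set.mem_inter_iff, Set.mem_empty_iff_false, iff_false]
  rintro ⟨h1, h2⟩
  exact h ((Set.mem_singleton_iff.mp h1).symm.trans (Set.mem_singleton_iff.mp h2))

lemma mem_Pz_oddPart (x : C2) : x ∈ Pz (oddPart x) := rfl

lemma oddPart_eq_of_mem {x z : C2} (h : x ∈ Pz z) : oddPart x = z := h

/-- the whole Cantor space is perfect -/
lemma perfect_univ : Perfect (Set.univ : Set C2) := by
  refine ⟨isClosed_univ, preperfect_iff_nhds.mpr ?_⟩
  intro x _ U hU
  set y : ℕ → C2 := fun n => Function.update x n (! x n) with hy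
  have hcyl : ∀ n, y n ∈ cyl x n := by
    intro n
    rw [cyl_eq]
    intro k hk
    simp [hy, Function.update_of_ne (by omega : k ≠ n)]
  have htd : Tendsto y atTop (𝓝 x) := tendsto_of_cyl x y hcyl
  obtain ⟨n, hn⟩ := (htd.eventually_mem hU).exists
  refine ⟨y n, ⟨hn, Set.mem_univ _⟩, ?_⟩
  intro hc
  have := congrFun hc n
  simp [hy] at this

lemma perfect_image {f : C2 → C2} (hf : Continuous f) (hinj : Function.Injective f)
    {K : Set C2} (hK : Perfect K) (hne : K.Nonempty) :
    Perfect (f '' K) ∧ (f '' K).Nonempty := by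
  refine ⟨⟨?_, ?_⟩, hne.image f⟩
  · exact (hK.closed.isCompact.image hf).isClosed
  · rw [preperfect_iff_nhds]
    rintro _ ⟨x, hx, rfl⟩ U hU
    have hU' : f ⁻¹' U ∈ 𝓝 x := hf.continuousAt.preimage_mem_nhds hU
    obtain ⟨y, ⟨hyU, hyK⟩, hyne⟩ := (preperfect_iff_nhds.mp hK.acc) x hx _ hU'
    exact ⟨f y, ⟨hyU, Set.mem_image_of_mem f hyK⟩, fun hc => hyne (hinj hc)⟩

lemma perfect_preimage {f : C2 → C2} (hf : Continuous f) (hinj : Function.Injective f)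
    {R : Set C2} (hR : Perfect R) (hne : R.Nonempty) (hsub : R ⊆ Set.range f) :
    Perfect (f ⁻¹' R) ∧ (f ⁻¹' R).Nonempty := by
  have hemb : Topology.IsInducing f := by
    have : IsCompact (Set.univ : Set C2) := isCompact_univ
    exact (hf.isClosedEmbedding hinj).toIsInducing
  constructor
  · refine ⟨hR.closed.preimage hf, ?_⟩
    rw [preperfect_iff_nhds]
    intro x hx U hU
    rw [hemb.nhds_eq_comap, Filter.mem_comap] at hU
    obtain ⟨V, hV, hVU⟩ := hU
    obtain ⟨w, ⟨hwV, hwR⟩, hwne⟩ := (preperfect_iff_nhds.mp hR.acc) (f x) hx V hV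
    obtain ⟨u, rfl⟩ := hsub hwR
    exact ⟨u, ⟨hVU hwV, hwR⟩, fun hc => hwne (by rw [hc])⟩
  · obtain ⟨w, hw⟩ := hne
    obtain ⟨u, rfl⟩ := hsub hw
    exact ⟨u, hw⟩

lemma mk_cantor : #C2 = continuum := by
  rw [← Cardinal.power_def, Cardinal.mk_bool, Cardinal.mk_nat, Cardinal.continuum]

lemma exists_not_mem_of_small {A : Set C2} (hA : #A < continuum) : ∃ v, v ∉ A := by
  by_contra hc
  push_neg at hc
  have : (Set.univ : Set C2) ⊆ A := fun v _ => hc v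
  have h1 : #(Set.univ : Set C2) ≤ #A := Cardinal.mk_le_mk_of_subset this
  rw [Cardinal.mk_univ, mk_cantor] at h1
  exact absurd (lt_of_le_of_lt h1 hA) (lt_irrefl _)

end MZ

namespace MZ

open Filter Topology Cardinal

lemma perfect_not_countable {Q : Set C2} (hQ : Perfect Q) (hne : Q.Nonempty) :
    ¬ Q.Countable := by
  intro hc
  letI := TopologicalSpace.upgradeIsCompletelyMetrizable C2
  obtain ⟨f, hrange, _, hinj⟩ := hQ.exists_nat_bool_injection hne
  have h1 : (Set.range f).Countable := hc.mono hrange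
  have h2 : #(Set.range f) = #C2 := Cardinal.mk_range_eq f hinj
  have h3 : #C2 ≤ ℵ₀ := by
    rw [← h2]
    exact Cardinal.mk_le_aleph0_iff.mpr (Set.countable_coe_iff.mpr h1)
  rw [mk_cantor] at h3
  exact absurd (lt_of_lt_of_le Cardinal.aleph0_lt_continuum h3) (lt_irrefl _)

lemma exists_perfect_subset {C : Set C2} (hC : IsClosed C) (hunc : ¬ C.Countable) :
    ∃ D, Perfect D ∧ D.Nonempty ∧ D ⊆ C :=
  exists_perfect_nonempty_of_isClosed_of_not_countable hC hunc

/-- every nonempty perfect set has a perfect subset avoiding any set of size < continuum -/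
lemma exists_perfect_avoid {Q : Set C2} (hQ : Perfect Q) (hne : Q.Nonempty)
    (A : Set C2) (hA : #A < continuum) :
    ∃ R, Perfect R ∧ R.Nonempty ∧ R ⊆ Q ∧ R ∩ A = ∅ := by
  letI := TopologicalSpace.upgradeIsCompletelyMetrizable C2
  obtain ⟨f, hrange, hcont, hinj⟩ := hQ.exists_nat_bool_injection hne
  have hPz : ∀ z : C2, Perfect (Pz z) ∧ (Pz z).Nonempty := by
    intro z
    rw [← range_itl, ← Set.image_univ]
    exact perfect_image (continuous_itl z) (itl_injective z) perfect_univ ⟨fun _ => false, trivial⟩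
  by_cases hbad : ∀ z : C2, (f '' Pz z ∩ A).Nonempty
  · exfalso
    choose a ha using hbad
    have hainj : Function.Injective a := by
      intro z z' h
      obtain ⟨u, hu, hufu⟩ := (ha z).1
      obtain ⟨u', hu', hufu'⟩ := (ha z').1
      have huu : u = u' := hinj (by rw [hufu, hufu', h])
      subst huu
      exact (oddPart_eq_of_mem hu).symm.trans (oddPart_eq_of_mem hu')
    have hmono : #C2 ≤ #A := by
      have he : #C2 = #(Set.range (fun z => (⟨a z, (ha z).2⟩ : A))) := by
        rw [Cardinal.mk_range_eq]
        intro z z' h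
        exact hainj (congrArg Subtype.val h)
      rw [he]
      exact Cardinal.mk_set_le _
    rw [mk_cantor] at hmono
    exact absurd (lt_of_le_of_lt hmono hA) (lt_irrefl _)
  · push_neg at hbad
    obtain ⟨z, hz⟩ := hbad
    obtain ⟨hperf, hne'⟩ := perfect_image hcont hinj (hPz z).1 (hPz z).2
    refine ⟨f '' Pz z, hperf, hne', ?_, hz⟩
    rintro x ⟨u, -, rfl⟩
    exact hrange ⟨u, rfl⟩

/-! ### set-level characterization of the Marczewski ideal -/

lemma mem_marczewski_of {X : Set C2}
    (h : ∀ Q : Set C2, Perfect Q → Q.Nonempty →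
      ∃ R, Perfect R ∧ R.Nonempty ∧ R ⊆ Q ∧ X ∩ R = ∅) :
    X ∈ marczewskiIdeal := by
  intro T hT
  obtain ⟨R, hRp, hRne, hRsub, hRX⟩ :=
    h (branches2 T) (perfect_branches2 hT) (branches2_nonempty hT)
  refine ⟨treeOf R, perfectTree_treeOf hRp hRne, treeOf_subset hRsub, ?_⟩
  rw [branches2_treeOf hRp.closed]
  exact hRX

lemma avoid_of_marczewski {X : Set C2} (hX : X ∈ marczewskiIdeal)
    {Q : Set C2} (hQ : Perfect Q) (hne : Q.Nonempty) :
    ∃ R, Perfect R ∧ R.Nonempty ∧ R ⊆ Q ∧ X ∩ R = ∅ := by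
  obtain ⟨S, hSp, hSsub, hSX⟩ := hX (treeOf Q) (perfectTree_treeOf hQ hne)
  refine ⟨branches2 S, perfect_branches2 hSp, branches2_nonempty hSp, ?_, hSX⟩
  have := branches2_mono hSsub
  rwa [branches2_treeOf hQ.closed] at this

lemma small_mem_marczewski {A : Set C2} (hA : #A < continuum) : A ∈ marczewskiIdeal := by
  apply mem_marczewski_of
  intro Q hQ hne
  obtain ⟨R, h1, h2, h3, h4⟩ := exists_perfect_avoid hQ hne A hA
  exact ⟨R, h1, h2, h3, by rw [Set.inter_comm]; exact h4⟩

lemma subset_mem_marczewski {X Y : Set C2} (hY : Y ∈ marczewskiIdeal) (hXY : X ⊆ Y) :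
    X ∈ marczewskiIdeal := by
  intro T hT
  obtain ⟨S, h1, h2, h3⟩ := hY T hT
  refine ⟨S, h1, h2, ?_⟩
  rw [Set.eq_empty_iff_forall_notMem] at *
  exact fun x hx => h3 x ⟨hXY hx.1, hx.2⟩

lemma empty_mem_marczewski : (∅ : Set C2) ∈ marczewskiIdeal := by
  intro T hT
  exact ⟨T, hT, Set.Subset.refl T, Set.empty_inter _⟩

lemma union_mem_marczewski {X Y : Set C2} (hX : X ∈ marczewskiIdeal)
    (hY : Y ∈ marczewskiIdeal) : X ∪ Y ∈ marczewskiIdeal := by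
  intro T hT
  obtain ⟨S1, h1p, h1s, h1X⟩ := hX T hT
  obtain ⟨S2, h2p, h2s, h2Y⟩ := hY S1 h1p
  refine ⟨S2, h2p, h2s.trans h1s, ?_⟩
  rw [Set.eq_empty_iff_forall_notMem] at *
  rintro x ⟨hx, hxb⟩
  rcases hx with hx | hx
  · exact h1X x ⟨hx, branches2_mono h2s hxb⟩
  · exact h2Y x ⟨hx, hxb⟩

lemma univ_not_mem_marczewski : (Set.univ : Set C2) ∉ marczewskiIdeal := by
  intro hc
  have hU : PerfectTree (Set.univ : Set (List Bool)) := by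
    refine ⟨⟨⟨[], trivial⟩, fun _ _ _ _ => trivial⟩, ?_⟩
    exact fun s _ => ⟨s, trivial, List.prefix_rfl, trivial, trivial⟩
  obtain ⟨S, hSp, _, hSX⟩ := hc Set.univ hU
  obtain ⟨x, hx⟩ := branches2_nonempty hSp
  rw [Set.eq_empty_iff_forall_notMem] at hSX
  exact hSX x ⟨trivial, hx⟩

lemma pullback_mem_marczewski (z : C2) {Y : Set C2} (hY : Y ∈ marczewskiIdeal) :
    itl z ⁻¹' Y ∈ marczewskiIdeal := by
  apply mem_marczewski_of
  intro Q hQ hne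
  obtain ⟨hip, hine⟩ := perfect_image (continuous_itl z) (itl_injective z) hQ hne
  obtain ⟨R, hRp, hRne, hRsub, hRY⟩ := avoid_of_marczewski hY hip hine
  have hRrange : R ⊆ Set.range (itl z) := fun x hx => by
    obtain ⟨u, _, rfl⟩ := hRsub hx
    exact ⟨u, rfl⟩
  obtain ⟨hpp, hpne⟩ := perfect_preimage (continuous_itl z) (itl_injective z) hRp hRne hRrange
  refine ⟨itl z ⁻¹' R, hpp, hpne, ?_, ?_⟩
  · intro u hu
    obtain ⟨v, hv, hvu⟩ := hRsub hu
    rwa [← itl_injective z hvu]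
  · rw [Set.eq_empty_iff_forall_notMem] at *
    rintro u ⟨hu1, hu2⟩
    exact hRY (itl z u) ⟨hu1, hu2⟩

end MZ

namespace MZ

open Filter Topology Cardinal

lemma perfectTree_univ : PerfectTree (Set.univ : Set (List Bool)) := by
  refine ⟨⟨⟨[], trivial⟩, fun _ _ _ _ => trivial⟩, ?_⟩
  exact fun s _ => ⟨s, trivial, List.prefix_rfl, trivial, trivial⟩

lemma exists_tau : ∃ τ : C2 → {T : Set (List Bool) // PerfectTree T}, Function.Surjective τ := by
  have h1 : #{T : Set (List Bool) // PerfectTree T} ≤ #C2 := by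
    calc #{T : Set (List Bool) // PerfectTree T} ≤ #(Set (List Bool)) := Cardinal.mk_subtype_le _
      _ = 2 ^ #(List Bool) := Cardinal.mk_set
      _ = 2 ^ ℵ₀ := by rw [Cardinal.mk_list_eq_aleph0]
      _ = #C2 := by rw [mk_cantor, Cardinal.continuum]
  obtain ⟨emb⟩ := Cardinal.le_def _ _ |>.mp h1
  have : Nonempty {T : Set (List Bool) // PerfectTree T} := ⟨⟨Set.univ, perfectTree_univ⟩⟩
  exact ⟨Function.invFun emb, Function.invFun_surjective emb.injective⟩

/-- type classification for sets used in the construction -/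
def typedSet (W : Set C2) : Prop := (∃ w, W ⊆ Pz w) ∨ (∀ w, (W ∩ Pz w).Countable)

section ECons

variable (r : C2 → C2 → Prop) [wo : IsWellOrder C2 r]
variable (τ : C2 → {T : Set (List Bool) // PerfectTree T})

abbrev StateE := Set C2 × C2 × C2

/-- conditions for the stage-`i` choice given the prior choices -/
def Good (i : C2) (prior : ∀ j, r j i → StateE) : Set StateE :=
  {p | Perfect p.1 ∧ p.1.Nonempty ∧ p.1 ⊆ branches2 (τ i).1 ∧ typedSet p.1 ∧
       (∀ j (hj : r j i), (prior j hj).2.2 ∉ p.1) ∧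
       (∀ j (hj : r j i), p.2.1 ≠ (prior j hj).2.1) ∧
       p.2.2 ∈ Pz p.2.1 ∧ p.2.2 ∉ p.1 ∧
       (∀ j (hj : r j i), p.2.2 ∉ (prior j hj).1)}

variable (hr : (#C2).ord = Ordinal.type r)

include hr in
lemma card_below (i : C2) : #{j // r j i} < continuum := by
  rw [← mk_cantor]
  have h1 := Ordinal.card_typein (r := r) i
  rw [← h1]
  exact Cardinal.card_typein_lt (r := r) i hr

include hr in
lemma good_nonempty (i : C2) (prior : ∀ j, r j i → StateE)
    (Htyped : ∀ j (hj : r j i), typedSet (prior j hj).1) :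
    (Good r τ i prior).Nonempty := by
  classical
  set Q := branches2 (τ i).1 with hQdef
  have hQp : Perfect Q := perfect_branches2 (τ i).2
  have hQne : Q.Nonempty := branches2_nonempty (τ i).2
  set Ep : Set C2 := Set.range (fun j : {j // r j i} => (prior j.1 j.2).2.2) with hEpdef
  have hEp : #Ep < continuum :=
    lt_of_le_of_lt Cardinal.mk_range_le (card_below r hr i)
  -- choose the witness perfect set W
  have hW : ∃ W : Set C2, Perfect W ∧ W.Nonempty ∧ W ⊆ Q ∧ typedSet W ∧ W ∩ Ep = ∅ := by
    by_cases hc : ∃ w, ¬ (Q ∩ Pz w).Countable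
    · obtain ⟨w, hw⟩ := hc
      obtain ⟨D, hDp, hDne, hDsub⟩ :=
        exists_perfect_subset (hQp.closed.inter (isClosed_Pz w)) hw
      obtain ⟨R, hRp, hRne, hRsub, hRE⟩ := exists_perfect_avoid hDp hDne Ep hEp
      exact ⟨R, hRp, hRne, hRsub.trans (hDsub.trans Set.inter_subset_left),
        Or.inl ⟨w, hRsub.trans (hDsub.trans Set.inter_subset_right)⟩, hRE⟩
    · push_neg at hc
      obtain ⟨R, hRp, hRne, hRsub, hRE⟩ := exists_perfect_avoid hQp hQne Ep hEp
      exact ⟨R, hRp, hRne, hRsub,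
        Or.inr (fun w => (hc w).mono (Set.inter_subset_inter_left _ hRsub)), hRE⟩
  obtain ⟨W, hWp, hWne, hWQ, hWt, hWE⟩ := hW
  -- choose a fresh odd-part index z₀
  set cw : {j // r j i} → C2 := fun j =>
    if h : ∃ w, (prior j.1 j.2).1 ⊆ Pz w then h.choose else (fun _ => false) with hcwdef
  set w0 : C2 := if h : ∃ w, W ⊆ Pz w then h.choose else (fun _ => false) with hw0def
  set Zbad : Set C2 := (Set.range fun j : {j // r j i} => (prior j.1 j.2).2.1) ∪
    (Set.range cw) ∪ {w0} with hZbaddef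
  have hZbad : #Zbad < continuum := by
    apply lt_of_le_of_lt (Cardinal.mk_union_le _ _)
    apply Cardinal.add_lt_of_lt Cardinal.aleph0_le_continuum
    · apply lt_of_le_of_lt (Cardinal.mk_union_le _ _)
      exact Cardinal.add_lt_of_lt Cardinal.aleph0_le_continuum
        (lt_of_le_of_lt Cardinal.mk_range_le (card_below r hr i))
        (lt_of_le_of_lt Cardinal.mk_range_le (card_below r hr i))
    · exact lt_of_le_of_lt (le_of_eq (Cardinal.mk_singleton _))
        (lt_of_lt_of_le Cardinal.one_lt_aleph0 Cardinal.aleph0_le_continuum)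
  obtain ⟨z0, hz0⟩ := exists_not_mem_of_small hZbad
  -- all earlier W's and the current W have countable trace on Pz z0
  have hkey : ∀ j : {j // r j i}, ((prior j.1 j.2).1 ∩ Pz z0).Countable := by
    intro j
    rcases Htyped j.1 j.2 with ⟨w, hw⟩ | hcnt
    · have hex : ∃ w, (prior j.1 j.2).1 ⊆ Pz w := ⟨w, hw⟩
      have hcw : (prior j.1 j.2).1 ⊆ Pz (cw j) := by
        rw [hcwdef]; simp only [hex, dif_pos]; exact hex.choose_spec
      have hne : cw j ≠ z0 := by
        intro hcon
        exact hz0 (Or.inl (Or.inr ⟨j, hcon⟩))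
      have hsub : (prior j.1 j.2).1 ∩ Pz z0 ⊆ (∅ : Set C2) := by
        rw [← Pz_disjoint hne]
        exact Set.inter_subset_inter_left _ hcw
      exact Set.countable_empty.mono hsub
    · exact hcnt z0
  have hkeyW : (W ∩ Pz z0).Countable := by
    rcases hWt with ⟨w, hw⟩ | hcnt
    · have hex : ∃ w, W ⊆ Pz w := ⟨w, hw⟩
      have hcw : W ⊆ Pz w0 := by
        rw [hw0def]; simp only [hex, dif_pos]; exact hex.choose_spec
      have hne : w0 ≠ z0 := by
        intro hcon
        exact hz0 (Or.inr (by rw [hcon]; rfl))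
      have hsub : W ∩ Pz z0 ⊆ (∅ : Set C2) := by
        rw [← Pz_disjoint hne]
        exact Set.inter_subset_inter_left _ hcw
      exact Set.countable_empty.mono hsub
    · exact hcnt z0
  -- choose the point e = itl z0 v0
  set Vbad : Set C2 := (⋃ j : {j // r j i}, itl z0 ⁻¹' ((prior j.1 j.2).1)) ∪
    (itl z0 ⁻¹' W) with hVbaddef
  have hVbad : #Vbad < continuum := by
    apply lt_of_le_of_lt (Cardinal.mk_union_le _ _)
    apply Cardinal.add_lt_of_lt Cardinal.aleph0_le_continuum
    · apply lt_of_le_of_lt (Cardinal.mk_iUnion_le_sum_mk)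
      have hsum : (Cardinal.sum fun j : {j // r j i} => #(itl z0 ⁻¹' ((prior j.1 j.2).1))) ≤
          Cardinal.sum fun _ : {j // r j i} => ℵ₀ := by
        apply Cardinal.sum_le_sum
        intro j
        apply Cardinal.mk_le_aleph0_iff.mpr
        apply Set.countable_coe_iff.mpr
        have : itl z0 ⁻¹' ((prior j.1 j.2).1) = itl z0 ⁻¹' ((prior j.1 j.2).1 ∩ Pz z0) := by
          ext v
          simp only [Set.mem_preimage, Set.mem_inter_iff, iff_self_and]
          intro _
          exact itl_mem_Pz z0 v
        rw [this]
        exact (hkey j).preimage (itl_injective z0)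
      apply lt_of_le_of_lt hsum
      rw [Cardinal.sum_const']
      exact Cardinal.mul_lt_of_lt Cardinal.aleph0_le_continuum
        (card_below r hr i) Cardinal.aleph0_lt_continuum
    · apply lt_of_le_of_lt _ Cardinal.aleph0_lt_continuum
      apply Cardinal.mk_le_aleph0_iff.mpr
      apply Set.countable_coe_iff.mpr
      have : itl z0 ⁻¹' W = itl z0 ⁻¹' (W ∩ Pz z0) := by
        ext v
        simp only [Set.mem_preimage, Set.mem_inter_iff, iff_self_and]
        intro _
        exact itl_mem_Pz z0 v
      rw [this]
      exact hkeyW.preimage (itl_injective z0)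
  obtain ⟨v0, hv0⟩ := exists_not_mem_of_small hVbad
  refine ⟨(W, z0, itl z0 v0), hWp, hWne, hWQ, hWt, ?_, ?_, itl_mem_Pz z0 v0, ?_, ?_⟩
  · -- earlier points avoid W
    intro j hj hmem
    rw [Set.eq_empty_iff_forall_notMem] at hWE
    exact hWE _ ⟨hmem, ⟨⟨j, hj⟩, rfl⟩⟩
  · -- z0 is fresh
    intro j hj hcon
    exact hz0 (Or.inl (Or.inl ⟨⟨j, hj⟩, hcon.symm⟩))
  · -- e ∉ W
    intro hmem
    exact hv0 (Or.inr hmem)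
  · -- e avoids all earlier W's
    intro j hj hmem
    exact hv0 (Or.inl (Set.mem_iUnion.mpr ⟨⟨j, hj⟩, hmem⟩))

attribute [local instance] Classical.propDecidable

/-- the transfinite recursion -/
noncomputable def stateF : C2 → StateE :=
  (IsWellFounded.wf (r := r)).fix fun i IH =>
    if h : (Good r τ i IH).Nonempty then h.choose else (∅, (fun _ => false), (fun _ => false))

lemma stateF_def (i : C2) : stateF r τ i =
    if h : (Good r τ i (fun j _ => stateF r τ j)).Nonempty then h.choose
    else (∅, (fun _ => false), (fun _ => false)) :=
  WellFounded.fix_eq _ _ i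

include hr in
lemma stateF_good : ∀ i, stateF r τ i ∈ Good r τ i (fun j _ => stateF r τ j) := by
  intro i
  refine (IsWellFounded.wf (r := r)).induction
    (C := fun i => stateF r τ i ∈ Good r τ i fun j _ => stateF r τ j) i ?_
  intro x IH
  have Htyped : ∀ j (hj : r j x), typedSet (stateF r τ j).1 :=
    fun j hj => (IH j hj).2.2.2.1
  have hne := good_nonempty r τ hr x (fun j _ => stateF r τ j) Htyped
  rw [stateF_def, dif_pos hne]
  exact hne.choose_spec

end ECons

/-- There is a Marczewski null set of size continuum. -/
lemma exists_big_s0 : ∃ E : Set C2, #E = continuum ∧ E ∈ marczewskiIdeal := by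
  classical
  obtain ⟨τ, hτ⟩ := exists_tau
  obtain ⟨r, wo, hr⟩ := Cardinal.ord_eq C2
  set F := stateF r τ with hFdef
  have hGood := fun i => stateF_good r τ hr i
  set eF : C2 → C2 := fun i => (F i).2.2 with heFdef
  set zF : C2 → C2 := fun i => (F i).2.1 with hzFdef
  set WF : C2 → Set C2 := fun i => (F i).1 with hWFdef
  have heW : ∀ γ i, eF γ ∉ WF i := by
    intro γ i
    rcases @trichotomous _ r _ γ i with h | h | h
    · exact (hGood i).2.2.2.2.1 γ h
    · subst h
      exact (hGood γ).2.2.2.2.2.2.2.1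
    · exact (hGood γ).2.2.2.2.2.2.2.2 i h
  have hePz : ∀ i, eF i ∈ Pz (zF i) := fun i => (hGood i).2.2.2.2.2.2.1
  have hzne : ∀ γ i, r γ i → zF i ≠ zF γ := fun γ i h => (hGood i).2.2.2.2.2.1 γ h
  have heinj : Function.Injective eF := by
    intro a b hab
    by_contra hne
    have hzab : zF a ≠ zF b := by
      rcases @trichotomous _ r _ a b with h | h | h
      · exact (hzne a b h).symm
      · exact absurd h hne
      · exact hzne b a h
    have h1 := hePz a
    have h2 := hePz b
    rw [hab] at h1
    have := Pz_disjoint hzab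
    rw [Set.eq_empty_iff_forall_notMem] at this
    exact this (eF b) ⟨h1, h2⟩
  refine ⟨Set.range eF, ?_, ?_⟩
  · rw [Cardinal.mk_range_eq _ heinj, mk_cantor]
  · intro T hT
    obtain ⟨i, hi⟩ := hτ ⟨T, hT⟩
    have hWp : Perfect (WF i) := (hGood i).1
    have hWne : (WF i).Nonempty := (hGood i).2.1
    have hWsub : WF i ⊆ branches2 T := by
      have h := (hGood i).2.2.1
      rw [hi] at h
      exact h
    refine ⟨treeOf (WF i), perfectTree_treeOf hWp hWne, treeOf_subset hWsub, ?_⟩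
    rw [branches2_treeOf hWp.closed]
    rw [Set.eq_empty_iff_forall_notMem]
    rintro x ⟨⟨γ, rfl⟩, hmem⟩
    exact heW γ i hmem

end MZ

namespace MZ

open Filter Topology Cardinal

/-- Main combination lemma: a union of copies of Marczewski null sets placed inside the
pairwise disjoint perfect sets `Pz z`, indexed along a Marczewski null index set,
is Marczewski null. -/
lemma union_pieces_mem {E : Set C2} (hE : E ∈ marczewskiIdeal)
    (Idx : Set C2) (hIdx : Idx ⊆ E) (XX : C2 → Set C2)
    (hXX : ∀ z ∈ Idx, XX z ∈ marczewskiIdeal) :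
    (⋃ z ∈ Idx, itl z '' XX z) ∈ marczewskiIdeal := by
  apply mem_marczewski_of
  intro Q hQ hne
  set Z := oddPart '' Q with hZdef
  have hZcl : IsClosed Z := (hQ.closed.isCompact.image continuous_oddPart).isClosed
  by_cases hZc : Z.Countable
  · -- some fiber of oddPart over Q is uncountable
    have hfib : ∃ z ∈ Z, ¬ (Q ∩ Pz z).Countable := by
      by_contra hcon
      push_neg at hcon
      have hcover : Q ⊆ ⋃ z ∈ Z, Q ∩ Pz z := by
        intro x hx
        exact Set.mem_biUnion (Set.mem_image_of_mem _ hx) ⟨hx, mem_Pz_oddPart x⟩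
      have : Q.Countable := ((hZc.biUnion hcon).mono hcover)
      exact perfect_not_countable hQ hne this
    obtain ⟨z, hzZ, hzunc⟩ := hfib
    obtain ⟨D, hDp, hDne, hDsub⟩ :=
      exists_perfect_subset (hQ.closed.inter (isClosed_Pz z)) hzunc
    by_cases hzI : z ∈ Idx
    · -- pull back through itl z and use XX z ∈ s⁰
      have hDrange : D ⊆ Set.range (itl z) := by
        rw [range_itl]
        exact hDsub.trans Set.inter_subset_right
      obtain ⟨hBp, hBne⟩ :=
        perfect_preimage (continuous_itl z) (itl_injective z) hDp hDne hDrange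
      obtain ⟨B', hB'p, hB'ne, hB'sub, hB'X⟩ :=
        avoid_of_marczewski (hXX z hzI) hBp hBne
      obtain ⟨hRp, hRne⟩ := perfect_image (continuous_itl z) (itl_injective z) hB'p hB'ne
      refine ⟨itl z '' B', hRp, hRne, ?_, ?_⟩
      · intro x hx
        obtain ⟨u, hu, rfl⟩ := hx
        exact (hDsub (hB'sub hu)).1
      · rw [Set.eq_empty_iff_forall_notMem]
        rintro x ⟨hx1, hx2⟩
        obtain ⟨u, huB, rfl⟩ := hx2
        obtain ⟨z', hz'I, hx1'⟩ := Set.mem_iUnion₂.mp hx1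
        obtain ⟨y, hy, hyx⟩ := hx1'
        have hzz : z' = z := by
          have h1 : oddPart (itl z u) = z := oddPart_itl z u
          have h2 : oddPart (itl z' y) = z' := oddPart_itl z' y
          rw [hyx] at h2
          rw [h1] at h2
          exact h2.symm
        subst hzz
        have : y = u := itl_injective z' hyx
        subst this
        rw [Set.eq_empty_iff_forall_notMem] at hB'X
        exact hB'X y ⟨hy, huB⟩
    · -- the fiber index is not used: D itself works
      refine ⟨D, hDp, hDne, hDsub.trans Set.inter_subset_left, ?_⟩
      rw [Set.eq_empty_iff_forall_notMem]
      rintro x ⟨hx1, hx2⟩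
      obtain ⟨z', hz'I, hx1'⟩ := Set.mem_iUnion₂.mp hx1
      obtain ⟨y, hy, hyx⟩ := hx1'
      have h1 : oddPart x = z := (hDsub hx2).2
      have h2 : oddPart x = z' := by rw [← hyx]; exact oddPart_itl z' y
      have : z' = z := h2.symm.trans h1
      exact hzI (this ▸ hz'I)
  · -- the image of oddPart is uncountable: use that E ∈ s⁰
    obtain ⟨D, hDp, hDne, hDsub⟩ := exists_perfect_subset hZcl hZc
    obtain ⟨Z1, hZ1p, hZ1ne, hZ1sub, hZ1E⟩ := avoid_of_marczewski hE hDp hDne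
    set C := Q ∩ oddPart ⁻¹' Z1 with hCdef
    have hCcl : IsClosed C := hQ.closed.inter (hZ1p.closed.preimage continuous_oddPart)
    have hCunc : ¬ C.Countable := by
      intro hc
      have himg : Z1 ⊆ oddPart '' C := by
        intro z1 hz1
        obtain ⟨q, hq, hqz⟩ := hDsub (hZ1sub hz1)
        exact ⟨q, ⟨hq, by rw [Set.mem_preimage, hqz]; exact hz1⟩, hqz⟩
      exact perfect_not_countable hZ1p hZ1ne ((hc.image oddPart).mono himg)
    obtain ⟨R, hRp, hRne, hRsub⟩ := exists_perfect_subset hCcl hCunc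
    refine ⟨R, hRp, hRne, hRsub.trans Set.inter_subset_left, ?_⟩
    rw [Set.eq_empty_iff_forall_notMem]
    rintro x ⟨hx1, hx2⟩
    obtain ⟨z', hz'I, hx1'⟩ := Set.mem_iUnion₂.mp hx1
    obtain ⟨y, hy, hyx⟩ := hx1'
    have h1 : oddPart x = z' := by rw [← hyx]; exact oddPart_itl z' y
    have h2 : oddPart x ∈ Z1 := (hRsub hx2).2
    rw [Set.eq_empty_iff_forall_notMem] at hZ1E
    exact hZ1E (oddPart x) ⟨h1 ▸ hIdx hz'I, h2⟩

end MZ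

namespace MZ

open Filter Topology Cardinal

lemma sUnion_finite_mem {J : Set (Set C2)} (hJ : J.Finite) :
    (∀ Y ∈ J, Y ∈ marczewskiIdeal) → ⋃₀ J ∈ marczewskiIdeal := by
  refine Set.Finite.induction_on J hJ ?_ ?_
  · intro _
    rw [Set.sUnion_empty]
    exact empty_mem_marczewski
  · intro A s _ _ ih h
    rw [Set.sUnion_insert]
    exact union_mem_marczewski (h A (Set.mem_insert _ _))
      (ih fun Y hY => h Y (Set.mem_insert_of_mem _ hY))

end MZ


theorem cof_marczewskiIdeal' : Cardinal.continuum < (idealCof2 marczewskiIdeal).ord.cof := by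
  classical
  open MZ Cardinal in
  set S := {c : Cardinal | ∃ J ⊆ marczewskiIdeal, Cardinal.mk J = c ∧
    ∀ X ∈ marczewskiIdeal, ∃ Y ∈ J, X ⊆ Y} with hSdef
  have hSne : S.Nonempty :=
    ⟨Cardinal.mk marczewskiIdeal, marczewskiIdeal, subset_rfl, rfl,
      fun X hX => ⟨X, hX, subset_rfl⟩⟩
  set κ := idealCof2 marczewskiIdeal with hκdef
  have hmem : κ ∈ S := csInf_mem hSne
  have hκle : ∀ c ∈ S, κ ≤ c := fun c hc => csInf_le' hc
  obtain ⟨J, hJsub, hJcard, hJcof⟩ := hmem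
  -- κ is infinite
  have hκinf : ℵ₀ ≤ κ := by
    by_contra hc
    push_neg at hc
    have hJfin : J.Finite := by
      rw [← Cardinal.lt_aleph0_iff_set_finite, hJcard]
      exact hc
    have hsU : ⋃₀ J ∈ marczewskiIdeal :=
      MZ.sUnion_finite_mem hJfin (fun Y hY => hJsub hY)
    have huniv : (Set.univ : Set MZ.C2) ⊆ ⋃₀ J := by
      intro x _
      have hx : ({x} : Set MZ.C2) ∈ marczewskiIdeal := by
        apply MZ.small_mem_marczewski
        rw [Cardinal.mk_singleton]
        exact lt_of_lt_of_le Cardinal.one_lt_aleph0 Cardinal.aleph0_le_continuum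
      obtain ⟨Y, hYJ, hYx⟩ := hJcof _ hx
      exact ⟨Y, hYJ, hYx rfl⟩
    exact MZ.univ_not_mem_marczewski
      (MZ.subset_mem_marczewski hsU huniv)
  -- suppose the cofinality were ≤ continuum
  by_contra hcof
  push_neg at hcof
  obtain ⟨ι, fo, hlsub, hι⟩ := Ordinal.exists_lsub_cof κ.ord
  have hιle : Cardinal.mk ι ≤ continuum := by rw [hι]; exact hcof
  obtain ⟨r, wo, hr⟩ := Cardinal.ord_eq J
  obtain ⟨E, hEcard, hEmem⟩ := MZ.exists_big_s0
  have hiE : Cardinal.mk ι ≤ Cardinal.mk E := by rw [hEcard]; exact hιle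
  obtain ⟨emb⟩ := (Cardinal.le_def _ _).mp hiE
  set zi : ι → MZ.C2 := fun i => (emb i).1 with hzidef
  have hziinj : Function.Injective zi :=
    fun a b h => emb.injective (Subtype.val_injective h)
  have hziE : ∀ i, zi i ∈ E := fun i => (emb i).2
  set Ji : ι → Set J := fun i => {Y | Ordinal.typein r Y ≤ fo i} with hJidef
  have hJicard : ∀ i, Cardinal.mk (Ji i) < κ := by
    intro i
    have hfi : fo i < κ.ord := by rw [← hlsub]; exact Ordinal.lt_lsub fo i
    have hlim : Order.IsSuccLimit κ.ord := Cardinal.isSuccLimit_ord hκinf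
    have hsucc : Order.succ (fo i) < κ.ord := hlim.succ_lt hfi
    have hsucc' : Order.succ (fo i) < Ordinal.type r := by
      rw [← hr, hJcard]; exact hsucc
    obtain ⟨b, hb⟩ := Ordinal.typein_surj r hsucc'
    have hsub : Ji i ⊆ {Y | r Y b} := by
      intro Y hY
      apply (Ordinal.typein_lt_typein r).mp
      rw [hb]
      exact Order.lt_succ_iff.mpr hY
    calc Cardinal.mk (Ji i) ≤ Cardinal.mk {Y : J | r Y b} :=
          Cardinal.mk_le_mk_of_subset hsub
      _ = (Ordinal.typein r b).card := Ordinal.card_typein b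
      _ = (Order.succ (fo i)).card := by rw [hb]
      _ < κ := Cardinal.lt_ord.mp hsucc
  have hJicover : ∀ Y : J, ∃ i, Y ∈ Ji i := by
    intro Y
    have h1 : Ordinal.typein r Y < Ordinal.type r := Ordinal.typein_lt_type r Y
    rw [← hr, hJcard, ← hlsub] at h1
    exact Ordinal.lt_lsub_iff.mp h1
  have hnotcof : ∀ i : ι, ∃ X ∈ marczewskiIdeal,
      ∀ Y : J, Y ∈ Ji i → ¬ X ⊆ MZ.itl (zi i) ⁻¹' (Y : Set MZ.C2) := by
    intro i
    by_contra hcon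
    push_neg at hcon
    set G : Set (Set MZ.C2) :=
      (fun Y : J => MZ.itl (zi i) ⁻¹' (Y : Set MZ.C2)) '' (Ji i) with hGdef
    have hGsub : G ⊆ marczewskiIdeal := by
      rintro A ⟨Y, hY, rfl⟩
      exact MZ.pullback_mem_marczewski _ (hJsub Y.2)
    have hGcof : ∀ X ∈ marczewskiIdeal, ∃ A ∈ G, X ⊆ A := by
      intro X hX
      obtain ⟨Y, hY, hsub⟩ := hcon X hX
      exact ⟨_, ⟨Y, hY, rfl⟩, hsub⟩
    have h1 : κ ≤ Cardinal.mk G := hκle _ ⟨G, hGsub, rfl, hGcof⟩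
    have h2 : Cardinal.mk G ≤ Cardinal.mk (Ji i) := Cardinal.mk_image_le
    exact absurd (lt_of_le_of_lt (h1.trans h2) (hJicard i)) (lt_irrefl _)
  choose Xi hXimem hXinot using hnotcof
  set Idx := Set.range zi with hIdxdef
  set XX : MZ.C2 → Set MZ.C2 :=
    fun z => if h : ∃ i, zi i = z then Xi h.choose else ∅ with hXXdef
  have hXXz : ∀ i : ι, XX (zi i) = Xi i := by
    intro i
    have hex : ∃ j, zi j = zi i := ⟨i, rfl⟩
    rw [hXXdef]
    simp only [hex, dif_pos]
    have hch : hex.choose = i := hziinj hex.choose_spec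
    rw [hch]
  have hXXmem : ∀ z ∈ Idx, XX z ∈ marczewskiIdeal := by
    rintro z ⟨i, rfl⟩
    rw [hXXz]
    exact hXimem i
  have hIdxE : Idx ⊆ E := by rintro z ⟨i, rfl⟩; exact hziE i
  have hbig : (⋃ z ∈ Idx, MZ.itl z '' XX z) ∈ marczewskiIdeal :=
    MZ.union_pieces_mem hEmem Idx hIdxE XX hXXmem
  obtain ⟨Y0, hY0J, hY0sup⟩ := hJcof _ hbig
  obtain ⟨i, hi⟩ := hJicover ⟨Y0, hY0J⟩
  have hnot := hXinot i ⟨Y0, hY0J⟩ hi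
  rw [Set.not_subset] at hnot
  obtain ⟨w, hw, hwn⟩ := hnot
  apply hwn
  have hz : zi i ∈ Idx := ⟨i, rfl⟩
  have hx : MZ.itl (zi i) w ∈ MZ.itl (zi i) '' XX (zi i) := by
    rw [hXXz]
    exact ⟨w, hw, rfl⟩
  exact hY0sup (Set.mem_biUnion hz hx)


/-- `cf(cof(s⁰)) > 𝔠` for the Marczewski ideal `s⁰`. -/
theorem cof_marczewskiIdeal : Cardinal.continuum < (idealCof2 marczewskiIdeal).ord.cof := by
  exact cof_marczewskiIdeal'
end

section
/- The cofinality of the cardinal cof(v⁰) is strictly greater than 𝔠, where v⁰ is the Silver ideal: cf(cof(v⁰)) > 2^{ℵ₀}. -/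
/-- The Silver ideal `v⁰`: all `X ⊆ 2^ω` such that every Silver condition has a Silver
subcondition whose branch set avoids `X`. -/
def silverIdeal : Set (Set (ℕ → Bool)) :=
  {X | ∀ T : Set (List Bool), IsSilver T →
    ∃ S : Set (List Bool), IsSilver S ∧ S ⊆ T ∧ X ∩ branches2 S = ∅}

namespace SilverAux

open Set Cardinal

abbrev Pt := ℕ → Bool
abbrev PF := ℕ → Option Bool

/-- `q` extends `p` as a partial function. -/
def Ext (p q : PF) : Prop := ∀ n b, p n = some b → q n = some b

/-- the domain of `p` has infinite complement -/
def Coinf (p : PF) : Prop := {n : ℕ | p n = none}.Infinite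

lemma ext_refl (p : PF) : Ext p p := fun _ _ h => h

lemma ext_trans {p q r : PF} (h1 : Ext p q) (h2 : Ext q r) : Ext p r :=
  fun n b h => h2 n b (h1 n b h)

lemma silverTree_mono {p q : PF} (h : Ext p q) : silverTree q ⊆ silverTree p := by
  intro s hs n hn b hb
  exact hs n hn b (h n b hb)

lemma branches2_mono {T T' : Set (List Bool)} (h : T ⊆ T') : branches2 T ⊆ branches2 T' :=
  fun x hx n => h (hx n)

lemma seqRestrict2_get (x : Pt) (m n : ℕ) (h : n < (seqRestrict2 x m).length) :
    (seqRestrict2 x m).get ⟨n, h⟩ = x n := by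
  simp [seqRestrict2]

lemma mem_branches_silverTree {p : PF} {x : Pt} :
    x ∈ branches2 (silverTree p) ↔ ∀ n b, p n = some b → x n = b := by
  constructor
  · intro hx n b hb
    have hlen : n < (seqRestrict2 x (n + 1)).length := by simp [seqRestrict2]
    have := hx (n + 1) n hlen b hb
    rwa [seqRestrict2_get] at this
  · intro h m n hlen b hb
    rw [seqRestrict2_get]
    exact h n b hb

lemma default_branch_mem (p : PF) :
    (fun n => (p n).getD false) ∈ branches2 (silverTree p) := by
  rw [mem_branches_silverTree]
  intro n b hb
  simp [hb]

lemma ext_of_silverTree_subset {p q : PF} (h : silverTree q ⊆ silverTree p) : Ext p q := by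
  classical
  intro n b hb
  by_contra hq
  cases hqn : q n with
  | some c =>
    have hcb : c ≠ b := fun hcb => hq (by rw [hqn, hcb])
    have hsq : List.ofFn (fun i : Fin (n + 1) => (q i).getD false) ∈ silverTree q := by
      intro m hm c' hc'
      rw [List.get_ofFn]
      show (q m).getD false = c'
      rw [hc']
      rfl
    have hlen : n < (List.ofFn (fun i : Fin (n + 1) => (q i).getD false)).length := by simp
    have h2 := h hsq n hlen b hb
    rw [List.get_ofFn] at h2
    apply hcb
    have h3 : (q n).getD false = b := h2
    rwa [hqn] at h3
  | none =>
    have hsq : List.ofFn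
        (fun i : Fin (n + 1) => if (i : ℕ) = n then !b else (q i).getD false) ∈ silverTree q := by
      intro m hm c' hc'
      rw [List.get_ofFn]
      show (if m = n then !b else (q m).getD false) = c'
      rw [if_neg, hc']
      · rfl
      · intro hmn
        rw [hmn, hqn] at hc'
        cases hc'
    have hlen : n < (List.ofFn
        (fun i : Fin (n + 1) => if (i : ℕ) = n then !b else (q i).getD false)).length := by simp
    have h2 := h hsq n hlen b hb
    rw [List.get_ofFn] at h2
    have h3 : (if n = n then !b else (q n).getD false) = b := h2
    rw [if_pos rfl] at h3
    simp at h3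

lemma disj_iff {A B : Set Pt} : A ∩ B = ∅ ↔ ∀ x, x ∈ A → x ∈ B → False := by
  constructor
  · intro h x hA hB
    have hx : x ∈ A ∩ B := ⟨hA, hB⟩
    rw [h] at hx
    exact hx
  · intro h
    ext x
    simp only [Set.mem_inter_iff, Set.mem_empty_iff_false, iff_false, not_and]
    intro hA hB
    exact h x hA hB

lemma mem_silverIdeal_iff {X : Set Pt} :
    X ∈ silverIdeal ↔ ∀ q : PF, Coinf q →
      ∃ u : PF, Coinf u ∧ Ext q u ∧ X ∩ branches2 (silverTree u) = ∅ := by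
  constructor
  · intro hX q hq
    obtain ⟨S, ⟨u, hu, rfl⟩, hsub, hdisj⟩ := hX (silverTree q) ⟨q, hq, rfl⟩
    exact ⟨u, hu, ext_of_silverTree_subset hsub, hdisj⟩
  · rintro h T ⟨q, hq, rfl⟩
    obtain ⟨u, hu, hext, hdisj⟩ := h q hq
    exact ⟨silverTree u, ⟨u, hu, rfl⟩, silverTree_mono hext, hdisj⟩

lemma coinf_update {q : PF} (hq : Coinf q) (m : ℕ) (b : Bool) :
    Coinf (Function.update q m (some b)) := by
  have hsub : {n | q n = none} \ {m} ⊆ {n | Function.update q m (some b) n = none} := by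
    rintro n ⟨h1, h2⟩
    simp only [Set.mem_singleton_iff] at h2
    simp only [Set.mem_setOf_eq, Function.update_of_ne h2]
    exact h1
  exact (hq.diff (Set.finite_singleton m)).mono hsub

lemma ext_update {q : PF} {m : ℕ} (hm : q m = none) (b : Bool) :
    Ext q (Function.update q m (some b)) := by
  intro n c hc
  rcases eq_or_ne n m with rfl | h
  · rw [hm] at hc; exact absurd hc (by simp)
  · rwa [Function.update_of_ne h]

lemma branch_update_eq {q : PF} {m : ℕ} {b : Bool} {x : Pt}
    (hx : x ∈ branches2 (silverTree (Function.update q m (some b)))) : x m = b :=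
  (mem_branches_silverTree.mp hx) m b (by simp)

lemma empty_mem_silverIdeal : (∅ : Set Pt) ∈ silverIdeal :=
  fun T hT => ⟨T, hT, subset_rfl, by simp⟩

lemma univ_not_mem_silverIdeal : (Set.univ : Set Pt) ∉ silverIdeal := by
  intro h
  have hco : Coinf (fun _ => (none : Option Bool)) := by
    have : {n : ℕ | (fun _ => (none : Option Bool)) n = none} = Set.univ := by
      ext n; simp
    rw [Coinf, this]
    exact Set.infinite_univ
  obtain ⟨u, hu, _, hdisj⟩ := mem_silverIdeal_iff.mp h _ hco
  rw [disj_iff] at hdisj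
  exact hdisj _ (Set.mem_univ _) (default_branch_mem u)

lemma singleton_mem_silverIdeal (x : Pt) : ({x} : Set Pt) ∈ silverIdeal := by
  rw [mem_silverIdeal_iff]
  intro q hq
  obtain ⟨m, hm⟩ := hq.nonempty
  refine ⟨Function.update q m (some (!(x m))), coinf_update hq m _, ext_update hm _, ?_⟩
  rw [disj_iff]
  rintro z hz1 hz2
  rw [Set.mem_singleton_iff] at hz1
  subst hz1
  have := branch_update_eq hz2
  simp at this

/-! ### The fill-in homeomorphism machinery -/

/-- Fill-in map: `y` on even coordinates, `x` on odd coordinates. -/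
def gmap (y : Pt) (x : Pt) : Pt := fun n => if n % 2 = 0 then y (n / 2) else x (n / 2)

/-- The partial function with domain the evens, following `y`. -/
def pev (y : Pt) : PF := fun n => if n % 2 = 0 then some (y (n / 2)) else none

/-- Push a condition forward along `gmap y`. -/
def liftPF (y : Pt) (r : PF) : PF := fun n => if n % 2 = 0 then some (y (n / 2)) else r (n / 2)

/-- Pull a condition back along `gmap y`. -/
def dropPF (u : PF) : PF := fun k => u (2 * k + 1)

/-- The "pairing" sequence: `pairSeq w (2k) = pairSeq w (2k+1) = w k`. -/
def pairSeq (w : Pt) : Pt := fun k => w (k / 2)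

lemma two_mul_mod (k : ℕ) : (2 * k) % 2 = 0 := by omega
lemma two_mul_div (k : ℕ) : (2 * k) / 2 = k := by omega
lemma two_mul_add_one_mod (k : ℕ) : (2 * k + 1) % 2 = 1 := by omega
lemma two_mul_add_one_div (k : ℕ) : (2 * k + 1) / 2 = k := by omega

lemma gmap_even (y x : Pt) (k : ℕ) : gmap y x (2 * k) = y k := by
  simp [gmap, two_mul_mod, two_mul_div]

lemma gmap_odd (y x : Pt) (k : ℕ) : gmap y x (2 * k + 1) = x k := by
  simp [gmap, two_mul_add_one_mod, two_mul_add_one_div]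

lemma liftPF_even (y : Pt) (r : PF) (k : ℕ) : liftPF y r (2 * k) = some (y k) := by
  simp [liftPF, two_mul_mod, two_mul_div]

lemma liftPF_odd (y : Pt) (r : PF) (k : ℕ) : liftPF y r (2 * k + 1) = r k := by
  simp [liftPF, two_mul_add_one_mod, two_mul_add_one_div]

lemma pairSeq_even (w : Pt) (k : ℕ) : pairSeq w (2 * k) = w k := by
  simp [pairSeq, two_mul_div]

lemma pairSeq_odd (w : Pt) (k : ℕ) : pairSeq w (2 * k + 1) = w k := by
  simp [pairSeq, two_mul_add_one_div]

lemma mem_branches_pev {y z : Pt} :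
    z ∈ branches2 (silverTree (pev y)) ↔ ∀ k, z (2 * k) = y k := by
  rw [mem_branches_silverTree]
  constructor
  · intro h k
    apply h (2 * k) (y k)
    simp [pev, two_mul_mod, two_mul_div]
  · intro h n b hb
    by_cases h2 : n % 2 = 0
    · have hn : n = 2 * (n / 2) := by omega
      simp only [pev, if_pos h2] at hb
      have hb' : y (n / 2) = b := by injection hb
      rw [hn, h (n / 2), hb']
    · simp only [pev, if_neg h2] at hb
      exact absurd hb (by simp)

lemma gmap_mem_branches_pev (y x : Pt) : gmap y x ∈ branches2 (silverTree (pev y)) :=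
  mem_branches_pev.mpr fun k => gmap_even y x k

lemma gmap_injective (y : Pt) : Function.Injective (gmap y) := by
  intro a b h
  funext k
  have := congrFun h (2 * k + 1)
  rwa [gmap_odd, gmap_odd] at this

lemma two_mul_add_one_injective : Function.Injective (fun k : ℕ => 2 * k + 1) :=
  fun a b hab => by
    have h : 2 * a + 1 = 2 * b + 1 := hab
    omega

lemma coinf_liftPF (y : Pt) {r : PF} (hr : Coinf r) : Coinf (liftPF y r) := by
  have himg : (fun k => 2 * k + 1) '' {k | r k = none} ⊆ {n | liftPF y r n = none} := by
    rintro n ⟨k, hk, rfl⟩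
    simpa [liftPF_odd] using hk
  exact (hr.image (two_mul_add_one_injective.injOn)).mono himg

lemma coinf_dropPF {u : PF} (hu : Coinf u) (hev : ∀ m, ∃ b, u (2 * m) = some b) :
    Coinf (dropPF u) := by
  apply Set.Infinite.of_image (fun k => 2 * k + 1)
  refine Set.Infinite.mono ?_ hu
  intro n hn
  have h2 : n % 2 ≠ 0 := by
    intro h0
    have hn' : n = 2 * (n / 2) := by omega
    obtain ⟨b, hb⟩ := hev (n / 2)
    rw [Set.mem_setOf_eq, hn', hb] at hn
    cases hn
  have hn' : n = 2 * (n / 2) + 1 := by omega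
  refine ⟨n / 2, ?_, ?_⟩
  swap
  · show 2 * (n / 2) + 1 = n
    omega
  show u (2 * (n / 2) + 1) = none
  rw [← hn']
  exact hn

/-- Pulling back a Silver-null set along `gmap y` gives a Silver-null set. -/
lemma preimage_gmap_mem {y : Pt} {W : Set Pt} (hW : W ∈ silverIdeal) :
    (gmap y) ⁻¹' W ∈ silverIdeal := by
  rw [mem_silverIdeal_iff] at hW ⊢
  intro r hr
  obtain ⟨u, hu, hext, hdisj⟩ := hW (liftPF y r) (coinf_liftPF y hr)
  have hevu : ∀ m, u (2 * m) = some (y m) := fun m => hext (2 * m) (y m) (liftPF_even y r m)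
  refine ⟨dropPF u, coinf_dropPF hu (fun m => ⟨y m, hevu m⟩), ?_, ?_⟩
  · intro k b hkb
    exact hext (2 * k + 1) b (by rwa [liftPF_odd])
  · rw [disj_iff]
    intro x hx hxbr
    rw [disj_iff] at hdisj
    refine hdisj (gmap y x) hx ?_
    rw [mem_branches_silverTree] at hxbr ⊢
    intro n b hb
    by_cases h2 : n % 2 = 0
    · have hn : n = 2 * (n / 2) := by omega
      rw [hn] at hb ⊢
      rw [hevu (n / 2)] at hb
      have hb' : y (n / 2) = b := by injection hb
      rw [gmap_even, hb']
    · have hn : n = 2 * (n / 2) + 1 := by omega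
      rw [hn] at hb ⊢
      rw [gmap_odd]
      exact hxbr (n / 2) b hb

/-- Pushing a Silver-null set forward along `gmap y` gives a Silver-null set. -/
lemma image_gmap_mem {y : Pt} {Z : Set Pt} (hZ : Z ∈ silverIdeal) :
    (gmap y) '' Z ∈ silverIdeal := by
  classical
  rw [mem_silverIdeal_iff] at hZ ⊢
  intro q hq
  by_cases h1 : ∃ k b, q (2 * k) = some b ∧ b ≠ y k
  · obtain ⟨k, b, hb, hne⟩ := h1
    refine ⟨q, hq, ext_refl q, ?_⟩
    rw [disj_iff]
    rintro z ⟨x, _, rfl⟩ hbr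
    have h := (mem_branches_silverTree.mp hbr) (2 * k) b hb
    rw [gmap_even] at h
    exact hne h.symm
  · by_cases h2 : ∃ k, q (2 * k) = none
    · obtain ⟨k, hk⟩ := h2
      refine ⟨Function.update q (2 * k) (some (!(y k))), coinf_update hq _ _,
        ext_update hk _, ?_⟩
      rw [disj_iff]
      rintro z ⟨x, _, rfl⟩ hbr
      have h := branch_update_eq hbr
      rw [gmap_even] at h
      simp at h
    · have hall : ∀ k, q (2 * k) = some (y k) := by
        intro k
        cases hqk : q (2 * k) with
        | none => exact absurd ⟨k, hqk⟩ h2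
        | some b =>
          by_cases hby : b = y k
          · rw [hby]
          · exact absurd ⟨k, b, hqk, hby⟩ h1
      obtain ⟨v, hv, hvext, hvdisj⟩ := hZ (dropPF q) (coinf_dropPF hq (fun m => ⟨y m, hall m⟩))
      refine ⟨liftPF y v, coinf_liftPF y hv, ?_, ?_⟩
      · intro n b hb
        by_cases hn2 : n % 2 = 0
        · have hn : n = 2 * (n / 2) := by omega
          rw [hn, hall] at hb
          have hb' : y (n / 2) = b := by injection hb
          rw [hn, liftPF_even, hb']
        · have hn : n = 2 * (n / 2) + 1 := by omega
          rw [hn] at hb ⊢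
          rw [liftPF_odd]
          exact hvext (n / 2) b hb
      · rw [disj_iff]
        rintro z ⟨x, hx, rfl⟩ hbr
        rw [disj_iff] at hvdisj
        refine hvdisj x hx ?_
        rw [mem_branches_silverTree] at hbr ⊢
        intro k b hb
        have h := hbr (2 * k + 1) b (by rwa [liftPF_odd])
        rwa [gmap_odd] at h

/-! ### The union lemma -/

lemma union_mem_silverIdeal {ι : Type} {f : ι → Pt} (hf : Function.Injective f)
    {Z : ι → Set Pt} (hZmem : ∀ i, Z i ∈ silverIdeal)
    (hZsub : ∀ i, Z i ⊆ branches2 (silverTree (pev (pairSeq (f i))))) :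
    (⋃ i, Z i) ∈ silverIdeal := by
  classical
  have hZval : ∀ i z, z ∈ Z i → ∀ k, z (4 * k) = f i k ∧ z (4 * k + 2) = f i k := by
    intro i z hz k
    have h := mem_branches_pev.mp (hZsub i hz)
    constructor
    · have h1 := h (2 * k)
      rw [show 2 * (2 * k) = 4 * k by ring, pairSeq_even] at h1
      exact h1
    · have h1 := h (2 * k + 1)
      rw [show 2 * (2 * k + 1) = 4 * k + 2 by ring, pairSeq_odd] at h1
      exact h1
  rw [mem_silverIdeal_iff]
  intro q hq
  by_cases hA : ∃ k, q (4 * k) = none ∨ q (4 * k + 2) = none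
  · obtain ⟨k, hk⟩ := hA
    obtain ⟨u, hcu, hextu, a, hua, hub⟩ :
        ∃ u, Coinf u ∧ Ext q u ∧ ∃ a : Bool,
          (∀ z ∈ branches2 (silverTree u), z (4 * k) = a) ∧
          (∀ z ∈ branches2 (silverTree u), z (4 * k + 2) = !a) := by
      rcases hk with hk | hk
      · cases hq2 : q (4 * k + 2) with
        | some b =>
          refine ⟨Function.update q (4 * k) (some (!b)), coinf_update hq _ _,
            ext_update hk _, !b, ?_, ?_⟩
          · intro z hz; exact branch_update_eq hz
          · intro z hz
            have heq : Function.update q (4 * k) (some (!b)) (4 * k + 2) = some b := by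
              rw [Function.update_of_ne (by omega)]; exact hq2
            have := (mem_branches_silverTree.mp hz) _ _ heq
            simpa using this
        | none =>
          refine ⟨Function.update (Function.update q (4 * k) (some true)) (4 * k + 2)
              (some false),
            coinf_update (coinf_update hq _ _) _ _, ?_, true, ?_, ?_⟩
          · refine ext_trans (ext_update hk _) (ext_update ?_ _)
            rw [Function.update_of_ne (by omega)]; exact hq2
          · intro z hz
            have heq : Function.update (Function.update q (4 * k) (some true)) (4 * k + 2)
                (some false) (4 * k) = some true := by
              rw [Function.update_of_ne (by omega), Function.update_self]
            exact (mem_branches_silverTree.mp hz) _ _ heq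
          · intro z hz
            have := branch_update_eq hz
            simpa using this
      · cases hq0 : q (4 * k) with
        | some b =>
          refine ⟨Function.update q (4 * k + 2) (some (!b)), coinf_update hq _ _,
            ext_update hk _, b, ?_, ?_⟩
          · intro z hz
            have heq : Function.update q (4 * k + 2) (some (!b)) (4 * k) = some b := by
              rw [Function.update_of_ne (by omega)]; exact hq0
            exact (mem_branches_silverTree.mp hz) _ _ heq
          · intro z hz; exact branch_update_eq hz
        | none =>
          refine ⟨Function.update (Function.update q (4 * k) (some true)) (4 * k + 2)
              (some false),
            coinf_update (coinf_update hq _ _) _ _, ?_, true, ?_, ?_⟩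
          · refine ext_trans (ext_update hq0 _) (ext_update ?_ _)
            rw [Function.update_of_ne (by omega)]; exact hk
          · intro z hz
            have heq : Function.update (Function.update q (4 * k) (some true)) (4 * k + 2)
                (some false) (4 * k) = some true := by
              rw [Function.update_of_ne (by omega), Function.update_self]
            exact (mem_branches_silverTree.mp hz) _ _ heq
          · intro z hz
            have := branch_update_eq hz
            simpa using this
    refine ⟨u, hcu, hextu, ?_⟩
    rw [disj_iff]
    intro z hz hbr
    obtain ⟨i, hzi⟩ := Set.mem_iUnion.mp hz
    have h1 := (hZval i z hzi k).1
    have h2 := (hZval i z hzi k).2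
    have h3 := hua z hbr
    have h4 := hub z hbr
    rw [h1] at h3
    rw [h2] at h4
    rw [h3] at h4
    simp at h4
  · push_neg at hA
    set w : Pt := fun k => (q (4 * k)).getD false with hw
    have hzw : ∀ z ∈ branches2 (silverTree q), ∀ k, z (4 * k) = w k := by
      intro z hz k
      cases hqk : q (4 * k) with
      | none => exact absurd hqk (hA k).1
      | some b =>
        have := (mem_branches_silverTree.mp hz) (4 * k) b hqk
        rw [this, hw]
        simp [hqk]
    by_cases hB1 : ∀ k, q (4 * k + 2) = q (4 * k)
    · by_cases hex : ∃ i, f i = w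
      · obtain ⟨i, hi⟩ := hex
        obtain ⟨u, hcu, hextu, hdisj⟩ := (mem_silverIdeal_iff.mp (hZmem i)) q hq
        refine ⟨u, hcu, hextu, ?_⟩
        rw [disj_iff]
        intro z hz hbr
        obtain ⟨j, hzj⟩ := Set.mem_iUnion.mp hz
        by_cases hji : j = i
        · subst hji
          rw [disj_iff] at hdisj
          exact hdisj z hzj hbr
        · have hbrq : z ∈ branches2 (silverTree q) := branches2_mono (silverTree_mono hextu) hbr
          have hfj : f j ≠ w := fun h => hji (hf (h.trans hi.symm))
          obtain ⟨k, hk⟩ := Function.ne_iff.mp hfj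
          exact hk (((hZval j z hzj k).1.symm.trans (hzw z hbrq k)))
      · refine ⟨q, hq, ext_refl q, ?_⟩
        rw [disj_iff]
        intro z hz hbr
        obtain ⟨j, hzj⟩ := Set.mem_iUnion.mp hz
        have hfj : f j ≠ w := fun h => hex ⟨j, h⟩
        obtain ⟨k, hk⟩ := Function.ne_iff.mp hfj
        exact hk (((hZval j z hzj k).1.symm.trans (hzw z hbr k)))
    · push_neg at hB1
      obtain ⟨k, hk⟩ := hB1
      refine ⟨q, hq, ext_refl q, ?_⟩
      rw [disj_iff]
      intro z hz hbr
      obtain ⟨j, hzj⟩ := Set.mem_iUnion.mp hz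
      obtain ⟨a, ha⟩ := Option.ne_none_iff_exists'.mp (hA k).1
      obtain ⟨b, hb⟩ := Option.ne_none_iff_exists'.mp (hA k).2
      have h1 := (mem_branches_silverTree.mp hbr) (4 * k) a ha
      have h2 := (mem_branches_silverTree.mp hbr) (4 * k + 2) b hb
      apply hk
      rw [ha, hb]
      have h3 := (hZval j z hzj k).1
      have h4 := (hZval j z hzj k).2
      rw [h1] at h3
      rw [h2] at h4
      rw [h3, h4]

/-! ### Cardinality arguments -/

lemma idealCof2_le {J : Set (Set Pt)} (hJ : J ⊆ silverIdeal)
    (hcof : ∀ X ∈ silverIdeal, ∃ Y ∈ J, X ⊆ Y) :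
    idealCof2 silverIdeal ≤ Cardinal.mk J :=
  csInf_le' ⟨J, hJ, rfl, hcof⟩

lemma exists_min_family : ∃ J ⊆ silverIdeal, Cardinal.mk J = idealCof2 silverIdeal ∧
    ∀ X ∈ silverIdeal, ∃ Y ∈ J, X ⊆ Y := by
  have hne : {c : Cardinal | ∃ J ⊆ silverIdeal, Cardinal.mk J = c ∧
      ∀ X ∈ silverIdeal, ∃ Y ∈ J, X ⊆ Y}.Nonempty :=
    ⟨Cardinal.mk silverIdeal, silverIdeal, subset_rfl, rfl, fun X hX => ⟨X, hX, subset_rfl⟩⟩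
  exact csInf_mem hne

lemma mk_Pt : Cardinal.mk Pt = Cardinal.continuum := by
  rw [show Cardinal.mk Pt = Cardinal.mk (ℕ → Bool) from rfl, Cardinal.mk_arrow]
  simp [Cardinal.two_power_aleph0]

/-- The key diagonalization: a union of ≤𝔠 many non-cofinal pieces is not cofinal. -/
lemma exists_uncovered {ι : Type} (hι : Cardinal.mk ι ≤ Cardinal.continuum)
    (Js : ι → Set (Set Pt)) (hJs : ∀ i, Js i ⊆ silverIdeal)
    (hsmall : ∀ i, Cardinal.mk (Js i) < idealCof2 silverIdeal) :
    ∃ X ∈ silverIdeal, ∀ i, ∀ Y ∈ Js i, ¬ X ⊆ Y := by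
  classical
  obtain ⟨ψ⟩ : Nonempty (ι ↪ Pt) := by
    rw [← Cardinal.le_def, mk_Pt]
    exact hι
  have key : ∀ i, ∃ Z ∈ silverIdeal, ∀ Y ∈ Js i, ¬ Z ⊆ (gmap (pairSeq (ψ i))) ⁻¹' Y := by
    intro i
    by_contra hcon
    push_neg at hcon
    set P : Set (Set Pt) := (fun Y => (gmap (pairSeq (ψ i))) ⁻¹' Y) '' (Js i) with hP
    have hPsub : P ⊆ silverIdeal := by
      rintro _ ⟨Y, hY, rfl⟩
      exact preimage_gmap_mem (hJs i hY)
    have hPcof : ∀ X ∈ silverIdeal, ∃ Y ∈ P, X ⊆ Y := by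
      intro X hX
      obtain ⟨Y, hY, hsub⟩ := hcon X hX
      exact ⟨_, ⟨Y, hY, rfl⟩, hsub⟩
    have hle : idealCof2 silverIdeal ≤ Cardinal.mk P := idealCof2_le hPsub hPcof
    have h2 : Cardinal.mk P ≤ Cardinal.mk (Js i) := Cardinal.mk_image_le
    exact absurd ((hle.trans h2).trans_lt (hsmall i)) (lt_irrefl _)
  choose Z hZmem hZnot using key
  refine ⟨⋃ i, (gmap (pairSeq (ψ i))) '' (Z i), ?_, ?_⟩
  · apply union_mem_silverIdeal ψ.injective (fun i => image_gmap_mem (hZmem i))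
    rintro i z ⟨x, _, rfl⟩
    exact gmap_mem_branches_pev _ _
  · intro i Y hY hsub
    apply hZnot i Y hY
    intro x hx
    exact hsub (Set.mem_iUnion.mpr ⟨i, ⟨x, hx, rfl⟩⟩)

lemma one_lt_idealCof2 : 1 < idealCof2 silverIdeal := by
  obtain ⟨J, hJ, hmk, hcof⟩ := exists_min_family
  rw [← hmk]
  by_contra h
  push_neg at h
  rw [Cardinal.mk_le_one_iff_set_subsingleton] at h
  obtain ⟨Y0, hY0J, _⟩ := hcof ∅ empty_mem_silverIdeal
  have hall : ∀ x : Pt, x ∈ Y0 := by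
    intro x
    obtain ⟨Y, hYJ, hxY⟩ := hcof {x} (singleton_mem_silverIdeal x)
    have hYeq : Y = Y0 := h hYJ hY0J
    exact hYeq ▸ hxY rfl
  have hYu : Y0 = Set.univ := Set.eq_univ_of_forall hall
  exact univ_not_mem_silverIdeal (hYu ▸ hJ hY0J)

lemma continuum_lt_idealCof2 : Cardinal.continuum < idealCof2 silverIdeal := by
  by_contra h
  push_neg at h
  obtain ⟨J, hJ, hmk, hcof⟩ := exists_min_family
  obtain ⟨X, hXmem, hXnot⟩ := exists_uncovered (ι := ↥J) (by rw [hmk]; exact h)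
    (fun Y => {(Y : Set Pt)})
    (fun Y Y' hY' => by
      rw [Set.mem_singleton_iff] at hY'
      exact hY' ▸ hJ Y.2)
    (fun Y => by
      rw [Cardinal.mk_singleton]
      exact one_lt_idealCof2)
  obtain ⟨Y, hYJ, hXY⟩ := hcof X hXmem
  exact hXnot ⟨Y, hYJ⟩ Y rfl hXY

end SilverAux

/-- `cf(cof(v⁰)) > 𝔠` for the Silver ideal `v⁰`. -/
theorem cof_silverIdeal : Cardinal.continuum < (idealCof2 silverIdeal).ord.cof := by
  classical
  by_contra hcon
  push_neg at hcon
  obtain ⟨J, hJ, hmk, hcof⟩ := SilverAux.exists_min_family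
  set κ := idealCof2 silverIdeal with hκ
  have hκinf : Cardinal.aleph0 ≤ κ :=
    le_of_lt (Cardinal.aleph0_lt_continuum.trans SilverAux.continuum_lt_idealCof2)
  have hmk2 : Cardinal.mk J = Cardinal.mk κ.ord.ToType := by
    rw [hmk, Cardinal.mk_ord_toType]
  obtain ⟨ρ⟩ := Cardinal.eq.mp hmk2
  obtain ⟨S, hSub, hScard⟩ := Order.exists_cof_eq κ.ord.ToType
  rw [Ordinal.cof_toType] at hScard
  set Js : ↥S → Set (Set SilverAux.Pt) :=
    fun b => {Y | ∃ h : Y ∈ J, ρ ⟨Y, h⟩ ≤ (b : κ.ord.ToType)} with hJsdef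
  have hJs : ∀ b, Js b ⊆ silverIdeal := by
    rintro b Y ⟨h, _⟩
    exact hJ h
  have hsmall : ∀ b, Cardinal.mk (Js b) < κ := by
    intro b
    have hle : Cardinal.mk (Js b) ≤ Cardinal.mk (Set.Iic (b : κ.ord.ToType)) := by
      refine Cardinal.mk_le_of_injective
        (f := fun Y => ⟨ρ ⟨Y.1, Y.2.choose⟩, Y.2.choose_spec⟩) ?_
      intro Y1 Y2 hEq
      have h1 := ρ.injective (Subtype.ext_iff.mp hEq)
      have h2 := congrArg Subtype.val h1
      exact Subtype.ext h2
    have hIic : Cardinal.mk (Set.Iic (b : κ.ord.ToType)) < κ := by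
      have hsub : Set.Iic (b : κ.ord.ToType) ⊆ insert (b : κ.ord.ToType) (Set.Iio b) := by
        intro x hx
        rcases (Set.mem_Iic.mp hx).lt_or_eq with h | h
        · exact Set.mem_insert_of_mem _ h
        · exact h ▸ Set.mem_insert _ _
      calc Cardinal.mk (Set.Iic (b : κ.ord.ToType))
          ≤ Cardinal.mk (insert (b : κ.ord.ToType) (Set.Iio (b : κ.ord.ToType)) : Set _) :=
            Cardinal.mk_le_mk_of_subset hsub
        _ ≤ Cardinal.mk (Set.Iio (b : κ.ord.ToType)) + 1 := Cardinal.mk_insert_le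
        _ < κ := Cardinal.add_lt_of_lt hκinf (Cardinal.mk_Iio_ord_toType (c := κ) b)
            (Cardinal.one_lt_aleph0.trans_le hκinf)
    exact hle.trans_lt hIic
  have hιle : Cardinal.mk ↥S ≤ Cardinal.continuum := by
    rw [hScard]
    exact hcon
  obtain ⟨X, hXmem, hXnot⟩ := SilverAux.exists_uncovered hιle Js hJs hsmall
  obtain ⟨Y, hYJ, hXY⟩ := hcof X hXmem
  obtain ⟨b, hbS, hb⟩ := hSub (ρ ⟨Y, hYJ⟩)
  exact hXnot ⟨b, hbS⟩ Y ⟨hYJ, hb⟩ hXY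
end
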